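/- arXiv:1405.1946 — 2 statements merged into one kernel-verified Lean document; each statement's English description precedes it below -/
import Mathlib

section
/- Let G be a finite group, N a soluble normal subgroup of G, and x ∈ F*(G) an element of the generalized Fitting subgroup of G. Then x lies in the Fitting subgroup of the group N⟨x⟩, i.e., x ∈ F(N⟨x⟩). -/
universe u v

/-- A subgroup `H` of `G` is *subnormal* if there is a chain of subgroups
`H = C_0 ≤ C_1 ≤ … ≤ C_n = G` with each `C_i` normal in `C_{i+1}`. -/
def IsSubnormal {G : Type*} [Group G] (H : Subgroup G) : Prop :=
  ∃ (n : ℕ) (c : ℕ → Subgroup G), c 0 = H ∧ c n = ⊤ ∧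
    ∀ i, i < n → c i ≤ c (i + 1) ∧ ((c i).subgroupOf (c (i + 1))).Normal

/-- A magma is nonabelian if some two elements do not commute. -/
def IsNonabelian (X : Type*) [Mul X] : Prop := ∃ a b : X, a * b ≠ b * a

/-- A group is quasisimple if it is perfect and its central quotient is a
nonabelian simple group. -/
def IsQuasisimple (Q : Type*) [Group Q] : Prop :=
  commutator Q = ⊤ ∧ IsSimpleGroup (Q ⧸ Subgroup.center Q) ∧
    IsNonabelian (Q ⧸ Subgroup.center Q)

/-- The Fitting subgroup of a group: the subgroup generated by (for a finite group,
the product of) all nilpotent normal subgroups. -/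
def fittingSubgroup (G : Type*) [Group G] : Subgroup G :=
  sSup {H : Subgroup G | H.Normal ∧ Group.IsNilpotent H}

/-- The generalized Fitting subgroup `F*(G)`: the product of the Fitting subgroup
and all subnormal quasisimple subgroups.  (The generating set below is closed under
conjugation, so its normal closure coincides with the subgroup it generates.) -/
def genFitting (G : Type*) [Group G] : Subgroup G :=
  Subgroup.normalClosure
    ((fittingSubgroup G : Set G) ∪
      {x | ∃ Q : Subgroup G, IsSubnormal Q ∧ IsQuasisimple ↥Q ∧ x ∈ Q})

instance genFitting_normal (G : Type*) [Group G] : (genFitting G).Normal :=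
  Subgroup.normalClosure_normal

/-- The soluble radical of a group: the subgroup generated by (for a finite group,
the largest of) all soluble normal subgroups. -/
def solubleRadical (G : Type*) [Group G] : Subgroup G :=
  Subgroup.normalClosure {x | ∃ H : Subgroup G, H.Normal ∧ IsSolvable ↥H ∧ x ∈ H}

instance solubleRadical_normal (G : Type*) [Group G] : (solubleRadical G).Normal :=
  Subgroup.normalClosure_normal

/-- The generalized Fitting series, bundled with the proof of normality of its terms:
`F*_0(G) = ⊥` and `F*_{n+1}(G)` is the full preimage in `G` of `F*(G/F*_n(G))`. -/
def genFittingSeriesAux (G : Type u) [Group G] : ℕ → {H : Subgroup G // H.Normal}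
  | 0 => ⟨⊥, inferInstance⟩
  | n + 1 =>
    let P := genFittingSeriesAux G n
    haveI := P.2
    ⟨(genFitting (G ⧸ P.1)).comap (QuotientGroup.mk' P.1),
      Subgroup.Normal.comap inferInstance _⟩

/-- The generalized Fitting series of `G`: `F*_1(G) = F*(G)` and `F*_{n+1}(G)` is the
full preimage in `G` of `F*(G/F*_n(G))`. -/
def genFittingSeries (G : Type u) [Group G] (n : ℕ) : Subgroup G :=
  (genFittingSeriesAux G n).1

instance genFittingSeries_normal (G : Type u) [Group G] (n : ℕ) :
    (genFittingSeries G n).Normal :=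
  (genFittingSeriesAux G n).2

/-- The generalized Fitting height `h*(G)`: the least `h` with `F*_h(G) = G`. -/
noncomputable def genFittingHeight (G : Type u) [Group G] : ℕ :=
  sInf {h : ℕ | genFittingSeries G h = ⊤}

/-- The fixed-point subgroup `C_G(φ)` of an automorphism `φ` of `G`. -/
def autFixedSubgroup {G : Type*} [Group G] (φ : G ≃* G) : Subgroup G where
  carrier := {g | φ g = g}
  one_mem' := map_one φ
  mul_mem' := fun {a b} ha hb => by
    simp only [Set.mem_setOf_eq] at *; rw [map_mul, ha, hb]
  inv_mem' := fun {a} ha => by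
    simp only [Set.mem_setOf_eq] at *; rw [map_inv, ha]

/-- The fixed-point subgroup `C_G(A)` of a group `A` acting on `G` by automorphisms
via `ρ : A →* MulAut G`. -/
def actionFixedSubgroup {A G : Type*} [Group A] [Group G] (ρ : A →* MulAut G) :
    Subgroup G where
  carrier := {g | ∀ a : A, ρ a g = g}
  one_mem' := fun a => map_one (ρ a)
  mul_mem' := fun {x y} hx hy a => by
    rw [map_mul, hx a, hy a]
  inv_mem' := fun {x} hx a => by
    rw [map_inv, hx a]

/-- The subgroup `[G, φ]` generated by all `g⁻¹ * φ(g)`. -/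
def autCommutator {G : Type*} [Group G] (φ : G ≃* G) : Subgroup G :=
  Subgroup.closure {x | ∃ g : G, x = g⁻¹ * φ g}

/-- `X` is a (nonempty) direct product of nonabelian simple groups. -/
def IsNonabelianSimpleProduct (X : Type*) [Group X] : Prop :=
  ∃ (ι : Type) (f : ι → Type) (inst : ∀ i : ι, Group (f i)),
    Nonempty ι ∧
    (∀ i : ι, letI := inst i
      IsSimpleGroup (f i) ∧ IsNonabelian (f i)) ∧
    (letI : ∀ i : ι, Group (f i) := inst
     Nonempty (X ≃* ∀ i : ι, f i))

/-- For subgroups `A ≤ B` of `G` with `A` normalized by `B`, the factor group `B/A`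
is soluble; expressed via a surjective homomorphism with kernel `A` (viewed in `B`). -/
def FactorSolvable {G : Type u} [Group G] (A B : Subgroup G) : Prop :=
  ∃ (X : Type u) (inst : Group X),
    letI := inst
    ∃ f : ↥B →* X, Function.Surjective f ∧ f.ker = A.subgroupOf B ∧ IsSolvable X

/-- For subgroups `A ≤ B` of `G` with `A` normalized by `B`, the factor group `B/A`
is a (nonempty) direct product of nonabelian simple groups. -/
def FactorNonabelianSimpleProduct {G : Type u} [Group G] (A B : Subgroup G) : Prop :=
  ∃ (X : Type u) (inst : Group X),
    letI := inst
    ∃ f : ↥B →* X, Function.Surjective f ∧ f.ker = A.subgroupOf B ∧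
      IsNonabelianSimpleProduct X

/-- The nonsoluble length `λ(G)`: the minimum `h` such that `G` has a normal series
`1 = G_0 ≤ G_1 ≤ … ≤ G_{2h+1} = G` in which for `i` even the factor `G_{i+1}/G_i` is
soluble (possibly trivial), and for `i` odd the factor `G_{i+1}/G_i` is a (nonempty)
direct product of nonabelian simple groups. -/
noncomputable def nonsolubleLength (G : Type u) [Group G] : ℕ :=
  sInf {h : ℕ | ∃ c : ℕ → Subgroup G,
    c 0 = ⊥ ∧ c (2 * h + 1) = ⊤ ∧ (∀ i, (c i).Normal) ∧ (∀ i, c i ≤ c (i + 1)) ∧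
    (∀ i < 2 * h + 1, Even i → FactorSolvable (c i) (c (i + 1))) ∧
    (∀ i < 2 * h + 1, ¬ Even i → FactorNonabelianSimpleProduct (c i) (c (i + 1)))}

/-- The upper nonsoluble series of `G`, bundled with normality: the value at `n` is the
pair `(M_n, L_n)`, where `M_{n+1}` is the full preimage in `G` of the soluble radical of
`G/L_n` and `L_{n+1}` is the full preimage in `G` of `F*(G/M_{n+1})`; here `L_0 = ⊥`
(and `M_0 = ⊥` is a dummy value). -/
def upperNSAux (G : Type u) [Group G] :
    ℕ → {H : Subgroup G // H.Normal} × {H : Subgroup G // H.Normal}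
  | 0 => (⟨⊥, inferInstance⟩, ⟨⊥, inferInstance⟩)
  | n + 1 =>
    let Lp := (upperNSAux G n).2
    haveI := Lp.2
    let M : {H : Subgroup G // H.Normal} :=
      ⟨(solubleRadical (G ⧸ Lp.1)).comap (QuotientGroup.mk' Lp.1),
        Subgroup.Normal.comap inferInstance _⟩
    haveI := M.2
    (M, ⟨(genFitting (G ⧸ M.1)).comap (QuotientGroup.mk' M.1),
      Subgroup.Normal.comap inferInstance _⟩)

/-- The term `M_k` of the upper nonsoluble series (for `k ≥ 1`); `M_1` is the soluble
radical of `G`. -/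
def upperM (G : Type u) [Group G] (k : ℕ) : Subgroup G := (upperNSAux G k).1.1

/-- The term `L_k` of the upper nonsoluble series; `L_0 = ⊥` and `L_k` is the full
preimage in `G` of `F*(G/M_k)`. -/
def upperL (G : Type u) [Group G] (k : ℕ) : Subgroup G := (upperNSAux G k).2.1

instance upperM_normal (G : Type u) [Group G] (k : ℕ) : (upperM G k).Normal :=
  (upperNSAux G k).1.2

instance upperL_normal (G : Type u) [Group G] (k : ℕ) : (upperL G k).Normal :=
  (upperNSAux G k).2.2

/-- The kernel of the conjugation action of a group `H` permuting its subnormal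
nonabelian simple subgroups. -/
def simplePermKernel (H : Type u) [Group H] : Subgroup H where
  carrier := {g | ∀ T : Subgroup H, IsSubnormal T → IsSimpleGroup ↥T → IsNonabelian ↥T →
    T.map (MulAut.conj g).toMonoidHom = T}
  one_mem' := by
    intro T _ _ _
    have h1 : (MulAut.conj (1 : H)).toMonoidHom = MonoidHom.id H := by
      ext x; simp
    rw [h1, Subgroup.map_id]
  mul_mem' := by
    intro a b ha hb T h1 h2 h3
    have hab : (MulAut.conj (a * b)).toMonoidHom =
        (MulAut.conj a).toMonoidHom.comp (MulAut.conj b).toMonoidHom := by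
      ext x; simp [mul_assoc]
    rw [hab, ← Subgroup.map_map, hb T h1 h2 h3, ha T h1 h2 h3]
  inv_mem' := by
    intro a ha T h1 h2 h3
    have h := ha T h1 h2 h3
    have hcomp : (MulAut.conj a⁻¹).toMonoidHom.comp (MulAut.conj a).toMonoidHom =
        MonoidHom.id H := by
      ext x; simp; group
    calc T.map (MulAut.conj a⁻¹).toMonoidHom
        = (T.map (MulAut.conj a).toMonoidHom).map (MulAut.conj a⁻¹).toMonoidHom := by
          rw [h]
      _ = T.map ((MulAut.conj a⁻¹).toMonoidHom.comp (MulAut.conj a).toMonoidHom) :=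
          Subgroup.map_map _ _ _
      _ = T := by rw [hcomp, Subgroup.map_id]

open scoped Pointwise
open scoped commutatorElement

section U1
open Subgroup

variable {G : Type*} [Group G]

/-- conjugation map of a normal subgroup is itself -/
lemma map_conj_of_normal {H : Subgroup G} (hH : H.Normal) (g : G) :
    H.map (MulAut.conj g).toMonoidHom = H := by
  apply le_antisymm
  · rintro - ⟨a, ha, rfl⟩
    simpa using hH.conj_mem a ha g
  · intro a ha
    exact ⟨g⁻¹ * a * g, by simpa using hH.conj_mem a ha g⁻¹, by simp [mul_assoc]⟩

lemma map_conj_self {R : Subgroup G} {g : G} (hg : g ∈ R) :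
    R.map (MulAut.conj g).toMonoidHom = R := by
  apply le_antisymm
  · rintro - ⟨a, ha, rfl⟩
    simpa using R.mul_mem (R.mul_mem hg ha) (R.inv_mem hg)
  · intro a ha
    refine ⟨g⁻¹ * a * g, R.mul_mem (R.mul_mem (R.inv_mem hg) ha) hg, by simp [mul_assoc]⟩

lemma normal_of_map_conj {H : Subgroup G} (h : ∀ g : G, H.map (MulAut.conj g).toMonoidHom = H) :
    H.Normal := by
  constructor
  intro a ha g
  rw [← h g]
  exact ⟨a, ha, rfl⟩

lemma iSup_normal {ι : Sort*} (f : ι → Subgroup G) (h : ∀ i, (f i).Normal) :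
    (⨆ i, f i).Normal := by
  apply normal_of_map_conj
  intro g
  rw [(Subgroup.gc_map_comap (MulAut.conj g).toMonoidHom).l_iSup]
  exact iSup_congr fun i => map_conj_of_normal (h i) g

lemma sSup_normal (S : Set (Subgroup G)) (h : ∀ H ∈ S, H.Normal) : (sSup S).Normal := by
  rw [sSup_eq_iSup]
  exact iSup_normal _ fun H => iSup_normal _ fun hH => h H hH

instance fittingSubgroup_normal' : Subgroup.Normal (sSup {H : Subgroup G | H.Normal ∧ Group.IsNilpotent H}) :=
  _root_.sSup_normal _ fun H hH => hH.1

/-- perfect and solvable implies trivial -/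
lemma subsingleton_of_solvable_of_perfect (X : Type*) [Group X] [Group.IsSolvable X]
    (h : commutator X = ⊤) : Subsingleton X := by
  have hd : ∀ n, derivedSeries X n = ⊤ := by
    intro n
    induction n with
    | zero => rfl
    | succ n ih => rw [derivedSeries_succ, ih]; exact h
  obtain ⟨n, hn⟩ := Group.IsSolvable.solvable (G := X)
  rw [hd n] at hn
  constructor
  intro a b
  have ha : a ∈ (⊥ : Subgroup X) := hn ▸ mem_top a
  have hb : b ∈ (⊥ : Subgroup X) := hn ▸ mem_top b
  rw [mem_bot] at ha hb
  rw [ha, hb]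

/-- a perfect subgroup of G which is solvable is trivial -/
lemma eq_bot_of_solvable_of_perfect (R : Subgroup G) (hs : IsSolvable ↥R)
    (h : ⁅R, R⁆ = R) : R = ⊥ := by
  have hcomm : commutator ↥R = ⊤ := by
    apply Subgroup.map_injective R.subtype_injective
    rw [show _root_.commutator ↥R = ⁅(⊤ : Subgroup ↥R), ⊤⁆ from rfl, Subgroup.map_commutator]
    have : Subgroup.map R.subtype ⊤ = R := by
      rw [← MonoidHom.range_eq_map, R.range_subtype]
    rw [this, h]
  have := @subsingleton_of_solvable_of_perfect ↥R _ hs hcomm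
  rw [eq_bot_iff]
  intro a ha
  have : (⟨a, ha⟩ : ↥R) = ⟨1, R.one_mem⟩ := Subsingleton.elim _ _
  simpa using congrArg Subtype.val this

end U1

section Transport

open Subgroup

variable {A : Type*} {B : Type*} [Group A] [Group B]

lemma map_center_equiv (e : A ≃* B) :
    (Subgroup.center A).map e.toMonoidHom = Subgroup.center B := by
  ext b
  constructor
  · rintro ⟨a, ha, rfl⟩
    have ha' : a ∈ Subgroup.center A := ha
    rw [Subgroup.mem_center_iff] at ha'
    have ha := ha'
    rw [Subgroup.mem_center_iff]
    intro g
    have := ha (e.symm g)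
    calc g * e a = e (e.symm g) * e a := by rw [e.apply_symm_apply]
    _ = e (e.symm g * a) := by rw [map_mul]
    _ = e (a * e.symm g) := by rw [this]
    _ = e a * g := by rw [map_mul, e.apply_symm_apply]
  · intro hb
    refine ⟨e.symm b, show e.symm b ∈ Subgroup.center A from ?_, by simp⟩
    rw [Subgroup.mem_center_iff] at hb ⊢
    intro g
    apply e.injective
    simp only [map_mul, e.apply_symm_apply]
    exact hb (e g)

lemma isSimpleGroup_of_mulEquiv (e : A ≃* B) [h : IsSimpleGroup A] : IsSimpleGroup B := by
  have : Nontrivial B := e.symm.toEquiv.nontrivial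
  exact IsSimpleGroup.isSimpleGroup_of_surjective e.toMonoidHom e.surjective

lemma isQuasisimple_of_mulEquiv (e : A ≃* B) (h : IsQuasisimple A) : IsQuasisimple B := by
  obtain ⟨h1, h2, h3⟩ := h
  have hq : (A ⧸ Subgroup.center A) ≃* (B ⧸ Subgroup.center B) :=
    QuotientGroup.congr (Subgroup.center A) (Subgroup.center B) e (map_center_equiv e)
  refine ⟨?_, ?_, ?_⟩
  · have : Subgroup.map e.toMonoidHom (_root_.commutator A) = _root_.commutator B := by
      rw [show _root_.commutator A = ⁅(⊤ : Subgroup A), ⊤⁆ from rfl,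
        show _root_.commutator B = ⁅(⊤ : Subgroup B), ⊤⁆ from rfl, Subgroup.map_commutator,
        Subgroup.map_top_of_surjective _ e.surjective]
    rw [← this, h1, Subgroup.map_top_of_surjective _ e.surjective]
  · exact @isSimpleGroup_of_mulEquiv _ _ _ _ hq h2
  · obtain ⟨a, b, hab⟩ := h3
    exact ⟨hq a, hq b, fun hcon => hab (hq.injective (by simp only [map_mul]; exact hcon))⟩

lemma isNonabelian_nontrivial {X : Type*} [Mul X] (h : IsNonabelian X) : ∃ a b : X, a ≠ b := by
  obtain ⟨a, b, hab⟩ := h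
  by_contra hcon
  push_neg at hcon
  exact hab (by rw [hcon (a*b) (b*a)])

end Transport

section Part3
open Subgroup
open scoped Pointwise

variable {G : Type*} [Group G]

lemma solvable_normal_le_center {G : Type*} [Group G] (hG : IsQuasisimple G)
    {N : Subgroup G} (hN : N.Normal) (hNs : IsSolvable ↥N) : N ≤ Subgroup.center G := by
  obtain ⟨hperf, hsimp, hnonab⟩ := hG
  set Z := Subgroup.center G with hZ
  have hmapN : (N.map (QuotientGroup.mk' Z)).Normal :=
    hN.map _ (QuotientGroup.mk'_surjective Z)
  rcases hmapN.eq_bot_or_eq_top with hbot | htop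
  · rw [Subgroup.map_eq_bot_iff, QuotientGroup.ker_mk'] at hbot
    exact hbot
  · exfalso
    have hsup : N ⊔ Z = ⊤ := by
      have h2 := Subgroup.comap_map_eq (QuotientGroup.mk' Z) N
      rw [htop, QuotientGroup.ker_mk', Subgroup.comap_top] at h2
      exact h2.symm
    have hcomm : _root_.commutator G ≤ N := by
      rw [show _root_.commutator G = ⁅(⊤ : Subgroup G), ⊤⁆ from rfl, Subgroup.commutator_le]
      intro g₁ h₁ g₂ h₂
      have hg₁ : g₁ ∈ ((N : Set G) * (Z : Set G)) := by
        rw [← Subgroup.mul_normal N Z, hsup]; trivial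
      have hg₂ : g₂ ∈ ((N : Set G) * (Z : Set G)) := by
        rw [← Subgroup.mul_normal N Z, hsup]; trivial
      obtain ⟨n, hn, z, hz, rfl⟩ := hg₁
      obtain ⟨m, hm, w, hw, rfl⟩ := hg₂
      have e1 : (QuotientGroup.mk' N) (n * z) = (QuotientGroup.mk' N) z := by
        rw [map_mul]
        rw [show (QuotientGroup.mk' N) n = 1 from (QuotientGroup.eq_one_iff n).mpr hn, one_mul]
      have e2 : (QuotientGroup.mk' N) (m * w) = (QuotientGroup.mk' N) w := by
        rw [map_mul]
        rw [show (QuotientGroup.mk' N) m = 1 from (QuotientGroup.eq_one_iff m).mpr hm, one_mul]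
      have hker : (QuotientGroup.mk' N) ⁅n * z, m * w⁆ = 1 := by
        rw [map_commutatorElement, e1, e2, commutatorElement_eq_one_iff_commute]
        exact Commute.map (Subgroup.mem_center_iff.mp hz w).symm (QuotientGroup.mk' N)
      exact (QuotientGroup.eq_one_iff _).mp hker
    have hNtop : N = ⊤ := le_antisymm le_top (by rw [← hperf]; exact hcomm)
    have hsolvTop : Group.IsSolvable ↥(⊤ : Subgroup G) := hNtop ▸ hNs
    have hsolvG : Group.IsSolvable G :=
      solvable_of_surjective (f := (Subgroup.topEquiv (G := G)).toMonoidHom)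
        (MulEquiv.surjective (Subgroup.topEquiv (G := G)))
    have hsub : Subsingleton G := subsingleton_of_solvable_of_perfect G hperf
    have hsubQ : Subsingleton (G ⧸ Z) := QuotientGroup.mk_surjective.subsingleton
    obtain ⟨a, b, hab⟩ := isNonabelian_nontrivial hnonab
    exact hab (Subsingleton.elim a b)

lemma subgroupOf_top_normal {A : Subgroup G} (h : (A.subgroupOf (⊤ : Subgroup G)).Normal) :
    A.Normal := by
  constructor
  intro a ha g
  have := h.conj_mem ⟨a, mem_top a⟩ (by rwa [Subgroup.mem_subgroupOf]) ⟨g, mem_top g⟩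
  rw [Subgroup.mem_subgroupOf] at this
  simpa using this

lemma subgroupOf_subgroupOf_normal {A B K : Subgroup G} (hBK : B ≤ K)
    (h : (A.subgroupOf B).Normal) :
    ((A.subgroupOf K).subgroupOf (B.subgroupOf K)).Normal := by
  constructor
  rintro ⟨n, hnB⟩ hn ⟨g, hgB⟩
  rw [Subgroup.mem_subgroupOf] at hn hnB hgB ⊢
  rw [Subgroup.mem_subgroupOf] at hn ⊢
  have := h.conj_mem ⟨(n : G), hnB⟩ (by rwa [Subgroup.mem_subgroupOf]) ⟨(g : G), hgB⟩
  rw [Subgroup.mem_subgroupOf] at this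
  simpa using this

lemma subgroupOf_map_conj_normal {A B : Subgroup G} {e : G ≃* G} (hAB : A ≤ B)
    (h : (A.subgroupOf B).Normal) :
    ((A.map e.toMonoidHom).subgroupOf (B.map e.toMonoidHom)).Normal := by
  constructor
  rintro ⟨n, hnB⟩ hn ⟨g, hgB⟩
  rw [Subgroup.mem_subgroupOf] at hn ⊢
  simp only [Subgroup.coe_mk] at hn
  obtain ⟨b, hb, rfl⟩ := hgB
  obtain ⟨a, ha, hea⟩ := hn
  have hamem : a ∈ B := hAB ha
  have := h.conj_mem ⟨a, hamem⟩ (by rwa [Subgroup.mem_subgroupOf]) ⟨b, hb⟩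
  rw [Subgroup.mem_subgroupOf] at this
  refine ⟨b * a * b⁻¹, this, ?_⟩
  simp only [map_mul, map_inv, hea]
  rfl

theorem lemB : ∀ (n : ℕ), ∀ (G : Type u) [inst : Group G], ∀ (Q : Subgroup G) (c : ℕ → Subgroup G),
    c 0 = Q → c n = ⊤ → (∀ i, i < n → c i ≤ c (i + 1) ∧ ((c i).subgroupOf (c (i + 1))).Normal) →
    IsQuasisimple ↥Q → ∀ (N : Subgroup G), N.Normal → IsSolvable ↥N →
    ∀ q ∈ Q, ∀ a ∈ N, q * a = a * q := by
  intro n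
  induction n with
  | zero =>
    intro G _ Q c hc0 hcn hch hQ N hN hNs q hq a ha
    have hQtop : Q = ⊤ := by rw [← hc0, hcn]
    have hQ' : IsQuasisimple ↥(⊤ : Subgroup G) := hQtop ▸ hQ
    have hGq : IsQuasisimple G := isQuasisimple_of_mulEquiv (Subgroup.topEquiv) hQ'
    have := solvable_normal_le_center hGq hN hNs ha
    exact Subgroup.mem_center_iff.mp this q
  | succ n ih =>
    intro G _ Q c hc0 hcn hch hQ N hN hNs q hq a ha
    -- chain monotonicity
    have hmono : ∀ d i, i + d ≤ n + 1 → c i ≤ c (i + d) := by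
      intro d
      induction d with
      | zero => intro i _; exact le_refl _
      | succ d ihd =>
        intro i h
        calc c i ≤ c (i + d) := ihd i (by omega)
        _ ≤ c (i + d + 1) := (hch (i + d) (by omega)).1
    set K := c n with hKdef
    have hK : K.Normal := by
      have h2 := (hch n (lt_add_one n)).2
      rw [hcn] at h2
      exact subgroupOf_top_normal h2
    have hQK : Q ≤ K := by
      have := hmono n 0 (by omega)
      rwa [zero_add, hc0] at this
    have hcK : ∀ i, i ≤ n → c i ≤ K := by
      intro i hi
      have := hmono (n - i) i (by omega)
      rwa [show i + (n - i) = n by omega] at this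
    -- restricted chain inside K
    have hch' : ∀ i, i < n → (c i).subgroupOf K ≤ (c (i + 1)).subgroupOf K ∧
        (((c i).subgroupOf K).subgroupOf ((c (i + 1)).subgroupOf K)).Normal := by
      intro i hi
      constructor
      · exact Subgroup.comap_mono (hch i (by omega)).1
      · exact subgroupOf_subgroupOf_normal (hcK (i + 1) (by omega)) (hch i (by omega)).2
    have hQ' : IsQuasisimple ↥(Q.subgroupOf K) :=
      isQuasisimple_of_mulEquiv (Subgroup.subgroupOfEquivOfLe hQK).symm hQ
    have hNs' : IsSolvable ↥(N.subgroupOf K) := by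
      let j : ↥(N.subgroupOf K) →* ↥N :=
        { toFun := fun x => ⟨((x : ↥K) : G), Subgroup.mem_subgroupOf.mp x.2⟩
          map_one' := rfl
          map_mul' := fun _ _ => rfl }
      have hj : Function.Injective j := by
        intro u v huv
        have h3 := congrArg (Subtype.val : ↥N → G) huv
        exact Subtype.ext (Subtype.ext h3)
      exact (haveI : Group.IsSolvable ↥N := hNs; solvable_of_solvable_injective hj)
    have hcomm := ih ↥K (Q.subgroupOf K) (fun i => (c i).subgroupOf K)
      (by show (c 0).subgroupOf K = Q.subgroupOf K; rw [hc0])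
      (by show (c n).subgroupOf K = ⊤; exact Subgroup.subgroupOf_self _) hch' hQ'
      (N.subgroupOf K) (hN.subgroupOf K) hNs'
    have hcommG : ∀ q', q' ∈ Q → ∀ b, b ∈ N → b ∈ K → q' * b = b * q' := by
      intro q' hq' b hbN hbK
      have h2 := hcomm ⟨q', hQK hq'⟩ (by rwa [Subgroup.mem_subgroupOf]) ⟨b, hbK⟩
        (by rwa [Subgroup.mem_subgroupOf])
      exact congrArg Subtype.val h2
    -- the homomorphism r ↦ r⁻¹ a r a⁻¹
    have hfN : ∀ r : ↥Q, (↑r : G)⁻¹ * a * ↑r * a⁻¹ ∈ N := by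
      intro r
      have h1 : (↑r : G)⁻¹ * a * ↑r ∈ N := by
        have := hN.conj_mem a ha (↑r : G)⁻¹
        simpa [mul_assoc] using this
      simpa [mul_assoc] using N.mul_mem h1 (N.inv_mem ha)
    have hfK : ∀ r : ↥Q, (↑r : G)⁻¹ * a * ↑r * a⁻¹ ∈ K := by
      intro r
      have h1 : a * ↑r * a⁻¹ ∈ K := by
        have := hK.conj_mem (↑r : G) (hQK r.2) a
        simpa [mul_assoc] using this
      have := K.mul_mem (K.inv_mem (hQK r.2)) h1
      simpa [mul_assoc] using this
    let f : ↥Q →* G :=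
      { toFun := fun r => (↑r : G)⁻¹ * a * ↑r * a⁻¹
        map_one' := by simp
        map_mul' := by
          intro r s
          have hsw : (↑s : G) * ((↑r : G)⁻¹ * a * ↑r * a⁻¹) =
              ((↑r : G)⁻¹ * a * ↑r * a⁻¹) * ↑s := hcommG ↑s s.2 _ (hfN r) (hfK r)
          push_cast
          calc ((↑r : G) * ↑s)⁻¹ * a * ((↑r : G) * ↑s) * a⁻¹
              = (↑s : G)⁻¹ * (((↑r : G)⁻¹ * a * ↑r * a⁻¹) * ↑s) *
                ((↑s : G)⁻¹ * a * ↑s * a⁻¹) := by group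
            _ = (↑s : G)⁻¹ * (↑s * ((↑r : G)⁻¹ * a * ↑r * a⁻¹)) *
                ((↑s : G)⁻¹ * a * ↑s * a⁻¹) := by rw [hsw]
            _ = ((↑r : G)⁻¹ * a * ↑r * a⁻¹) * ((↑s : G)⁻¹ * a * ↑s * a⁻¹) := by group }
    have hRN : f.range ≤ N := by
      rintro - ⟨r, rfl⟩
      exact hfN r
    have hperf : ⁅f.range, f.range⁆ = f.range := by
      rw [MonoidHom.range_eq_map, ← Subgroup.map_commutator]
      congr 1
      exact hQ.1
    have hRs : IsSolvable ↥f.range :=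
      (haveI : Group.IsSolvable ↥N := hNs; solvable_of_solvable_injective (Subgroup.inclusion_injective hRN))
    have hbot := eq_bot_of_solvable_of_perfect f.range hRs hperf
    have hfq : f ⟨q, hq⟩ = 1 := by
      have : f ⟨q, hq⟩ ∈ f.range := ⟨⟨q, hq⟩, rfl⟩
      rw [hbot] at this
      exact this
    have hfq' : q⁻¹ * a * q * a⁻¹ = 1 := hfq
    have := congrArg (fun t => q * t * a) hfq'
    simpa [mul_assoc] using this.symm

lemma commute_of_mem_subnormal_quasisimple {Q : Subgroup G} (hsub : _root_.IsSubnormal Q)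
    (hQ : IsQuasisimple ↥Q) {N : Subgroup G} (hN : N.Normal) (hNs : IsSolvable ↥N) :
    ∀ q ∈ Q, ∀ a ∈ N, q * a = a * q := by
  obtain ⟨n, c, hc0, hcn, hch⟩ := hsub
  exact lemB n G Q c hc0 hcn hch hQ N hN hNs

end Part3

section Part4
open Subgroup

variable {G : Type u} [Group G]

lemma commutator_closure_right_le {X T : Subgroup G} {S : Set G} (hT : T.Normal)
    (h : ∀ a ∈ X, ∀ s ∈ S, ⁅a, s⁆ ∈ T) : ⁅X, Subgroup.closure S⁆ ≤ T := by
  rw [Subgroup.commutator_le]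
  intro a ha b hb
  induction hb using Subgroup.closure_induction with
  | mem s hs => exact h a ha s hs
  | one => simpa using T.one_mem
  | mul u v hu hv hiu hiv =>
    have hid : ⁅a, u * v⁆ = ⁅a, u⁆ * (u * ⁅a, v⁆ * u⁻¹) := by group
    rw [hid]
    exact T.mul_mem hiu (hT.conj_mem _ hiv u)
  | inv u hu hiu =>
    have hid : ⁅a, u⁻¹⁆ = u⁻¹ * ⁅a, u⁆⁻¹ * (u⁻¹)⁻¹ := by group
    rw [hid]
    exact hT.conj_mem _ (T.inv_mem hiu) u⁻¹

lemma commutator_closure_left_le {Y T : Subgroup G} {S : Set G} (hT : T.Normal)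
    (h : ∀ s ∈ S, ∀ b ∈ Y, ⁅s, b⁆ ∈ T) : ⁅Subgroup.closure S, Y⁆ ≤ T := by
  rw [Subgroup.commutator_comm]
  apply commutator_closure_right_le hT
  intro b hb s hs
  have hid : ⁅b, s⁆ = ⁅s, b⁆⁻¹ := by group
  rw [hid]
  exact T.inv_mem (h s hs b hb)

/-- lower central series of a subgroup computed inside the ambient group -/
def lcsIn (H : Subgroup G) : ℕ → Subgroup G
  | 0 => H
  | i + 1 => ⁅lcsIn H i, H⁆

lemma lcsIn_normal {H : Subgroup G} (hH : H.Normal) : ∀ i, (lcsIn H i).Normal := by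
  intro i
  induction i with
  | zero => exact hH
  | succ i ih => exact @Subgroup.commutator_normal _ _ _ _ ih hH

lemma lcsIn_succ_le {H : Subgroup G} (hH : H.Normal) (i : ℕ) : lcsIn H (i + 1) ≤ lcsIn H i :=
  @Subgroup.commutator_le_left _ _ _ _ (lcsIn_normal hH i)

lemma lcsIn_le {H : Subgroup G} (hH : H.Normal) : ∀ i, lcsIn H i ≤ H := by
  intro i
  induction i with
  | zero => exact le_refl H
  | succ i ih => exact le_trans (lcsIn_succ_le hH i) ih

lemma lcsIn_mono {H : Subgroup G} (hH : H.Normal) {i j : ℕ} (h : i ≤ j) :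
    lcsIn H j ≤ lcsIn H i := by
  induction j with
  | zero => rw [Nat.le_zero.mp h]
  | succ j ih =>
    rcases Nat.lt_or_ge i (j + 1) with hlt | hge
    · exact le_trans (lcsIn_succ_le hH j) (ih (by omega))
    · rw [show i = j + 1 by omega]

lemma lcsIn_eq_map (H : Subgroup G) :
    ∀ i, lcsIn H i = Subgroup.map H.subtype ((⊤ : Subgroup ↥H).lowerCentralSeries i) := by
  intro i
  induction i with
  | zero =>
    show H = Subgroup.map H.subtype ⊤
    rw [← MonoidHom.range_eq_map, H.range_subtype]
  | succ i ih =>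
    show ⁅lcsIn H i, H⁆ = Subgroup.map H.subtype ⁅(⊤ : Subgroup ↥H).lowerCentralSeries i, ⊤⁆
    rw [Subgroup.map_commutator, ← ih, ← MonoidHom.range_eq_map, H.range_subtype]

lemma lcsIn_eventually_bot {H : Subgroup G} (hn : Group.IsNilpotent ↥H) :
    ∃ m, lcsIn H m = ⊥ := by
  obtain ⟨m, hm⟩ := _root_.nilpotent_iff_lowerCentralSeries.mp hn
  exact ⟨m, by rw [lcsIn_eq_map, hm, Subgroup.map_bot]⟩

/-- Fitting's theorem: the join of two normal nilpotent subgroups is nilpotent. -/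
lemma isNilpotent_sup_of_normal {H K : Subgroup G} (hH : H.Normal) (hK : K.Normal)
    (hHn : Group.IsNilpotent ↥H) (hKn : Group.IsNilpotent ↥K) :
    Group.IsNilpotent ↥(H ⊔ K) := by
  set J := H ⊔ K with hJdef
  -- shifted series
  set Ab : ℕ → Subgroup G := fun i => Nat.casesOn i ⊤ (lcsIn H) with hAb
  set Bb : ℕ → Subgroup G := fun i => Nat.casesOn i ⊤ (lcsIn K) with hBb
  have hAbnormal : ∀ i, (Ab i).Normal := by
    intro i; cases i with
    | zero => exact ⟨fun n _ g => Subgroup.mem_top _⟩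
    | succ i => exact lcsIn_normal hH i
  have hBbnormal : ∀ i, (Bb i).Normal := by
    intro i; cases i with
    | zero => exact ⟨fun n _ g => Subgroup.mem_top _⟩
    | succ i => exact lcsIn_normal hK i
  set E : ℕ → Subgroup G := fun c => ⨆ i : Fin (c + 2), (Ab i ⊓ Bb (c + 1 - i)) with hE
  have hEnormal : ∀ c, (E c).Normal := by
    intro c
    exact iSup_normal _ fun i => @Subgroup.normal_inf_normal _ _ _ _ (hAbnormal _) (hBbnormal _)
  -- the key step bounds
  have hstepH : ∀ i j, ⁅Ab i ⊓ Bb j, H⁆ ≤ Ab (i + 1) ⊓ Bb j := by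
    intro i j
    apply le_inf
    · cases i with
      | zero =>
        calc ⁅Ab 0 ⊓ Bb j, H⁆ ≤ ⁅(⊤ : Subgroup G), H⁆ := Subgroup.commutator_mono le_top (le_refl H)
        _ ≤ H := @Subgroup.commutator_le_right _ _ _ _ hH
      | succ i =>
        exact Subgroup.commutator_mono inf_le_left (le_refl H)
    · cases j with
      | zero => exact le_top
      | succ j =>
        calc ⁅Ab i ⊓ Bb (j+1), H⁆ ≤ ⁅lcsIn K j, H⁆ := Subgroup.commutator_mono inf_le_right (le_refl H)
        _ ≤ lcsIn K j := @Subgroup.commutator_le_left _ _ _ _ (lcsIn_normal hK j)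
  have hstepK : ∀ i j, ⁅Ab i ⊓ Bb j, K⁆ ≤ Ab i ⊓ Bb (j + 1) := by
    intro i j
    apply le_inf
    · cases i with
      | zero => exact le_top
      | succ i =>
        calc ⁅Ab (i+1) ⊓ Bb j, K⁆ ≤ ⁅lcsIn H i, K⁆ := Subgroup.commutator_mono inf_le_left (le_refl K)
        _ ≤ lcsIn H i := @Subgroup.commutator_le_left _ _ _ _ (lcsIn_normal hH i)
    · cases j with
      | zero =>
        calc ⁅Ab i ⊓ Bb 0, K⁆ ≤ ⁅(⊤ : Subgroup G), K⁆ := Subgroup.commutator_mono le_top (le_refl K)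
        _ ≤ K := @Subgroup.commutator_le_right _ _ _ _ hK
      | succ j =>
        exact Subgroup.commutator_mono inf_le_right (le_refl K)
  have hstep : ∀ c, ⁅E c, J⁆ ≤ E (c + 1) := by
    intro c
    rw [show E c = Subgroup.closure (⋃ i : Fin (c + 2),
        ((Ab i ⊓ Bb (c + 1 - i) : Subgroup G) : Set G)) from Subgroup.iSup_eq_closure _]
    apply commutator_closure_left_le (hEnormal (c + 1))
    intro s hs b hb
    rw [Set.mem_iUnion] at hs
    obtain ⟨i, hsi⟩ := hs
    have hsi' : s ∈ Ab i ⊓ Bb (c + 1 - i) := hsi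
    have hzp : Subgroup.zpowers s ≤ Ab i ⊓ Bb (c + 1 - i) := Subgroup.zpowers_le.mpr hsi'
    have hterm1 : (Ab (i + 1) ⊓ Bb (c + 1 - i) : Subgroup G) ≤ E (c + 1) := by
      have h9 := le_iSup (fun t : Fin (c + 3) => Ab t ⊓ Bb (c + 2 - t))
        (⟨(i : ℕ) + 1, by omega⟩ : Fin (c + 3))
      rw [show c + 2 - ((i : ℕ) + 1) = c + 1 - i by omega] at h9
      exact h9
    have hterm2 : (Ab i ⊓ Bb (c + 1 - i + 1) : Subgroup G) ≤ E (c + 1) := by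
      have h9 := le_iSup (fun t : Fin (c + 3) => Ab t ⊓ Bb (c + 2 - t))
        (⟨(i : ℕ), by omega⟩ : Fin (c + 3))
      rw [show c + 2 - (i : ℕ) = c + 1 - i + 1 by omega] at h9
      exact h9
    have hcom : ⁅Subgroup.zpowers s, J⁆ ≤ E (c + 1) := by
      rw [hJdef, Subgroup.sup_eq_closure]
      apply commutator_closure_right_le (hEnormal (c + 1))
      intro t ht u hu
      rcases hu with huH | huK
      · exact hterm1 (hstepH i (c + 1 - i)
          (Subgroup.commutator_mem_commutator (hzp ht) huH))
      · exact hterm2 (hstepK i (c + 1 - i)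
          (Subgroup.commutator_mem_commutator (hzp ht) huK))
    exact hcom (Subgroup.commutator_mem_commutator (Subgroup.mem_zpowers s) hb)
  -- main claim
  have hclaim : ∀ c, Subgroup.map J.subtype ((⊤ : Subgroup ↥J).lowerCentralSeries c) ≤ E c := by
    intro c
    induction c with
    | zero =>
      show Subgroup.map J.subtype ⊤ ≤ E 0
      rw [← MonoidHom.range_eq_map, J.range_subtype]
      apply sup_le
      · have h9 := le_iSup (fun t : Fin 2 => Ab t ⊓ Bb (0 + 1 - t)) (⟨1, by omega⟩ : Fin 2)
        exact le_trans (le_inf (le_refl H) le_top) h9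
      · have h9 := le_iSup (fun t : Fin 2 => Ab t ⊓ Bb (0 + 1 - t)) (⟨0, by omega⟩ : Fin 2)
        exact le_trans (le_inf le_top (le_refl K)) h9
    | succ c ih =>
      show Subgroup.map J.subtype ⁅(⊤ : Subgroup ↥J).lowerCentralSeries c, ⊤⁆ ≤ E (c + 1)
      rw [Subgroup.map_commutator, ← MonoidHom.range_eq_map, J.range_subtype]
      calc ⁅Subgroup.map J.subtype ((⊤ : Subgroup ↥J).lowerCentralSeries c), J⁆ ≤ ⁅E c, J⁆ :=
        Subgroup.commutator_mono ih (le_refl J)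
      _ ≤ E (c + 1) := hstep c
  -- termination
  obtain ⟨m, hm⟩ := lcsIn_eventually_bot hHn
  obtain ⟨m', hm'⟩ := lcsIn_eventually_bot hKn
  have hEbot : E (m + m' + 1) = ⊥ := by
    rw [hE]
    apply le_bot_iff.mp
    apply iSup_le
    intro i
    rcases Nat.lt_or_ge (i : ℕ) (m + 1) with hi | hi
    · have h2 : Bb (m + m' + 1 + 1 - i) = lcsIn K (m + m' + 1 - i) := by
        rw [show m + m' + 1 + 1 - (i : ℕ) = (m + m' + 1 - i) + 1 by omega]
      have h3 : Bb (m + m' + 1 + 1 - i) ≤ ⊥ := by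
        rw [h2, ← hm']
        exact lcsIn_mono hK (by omega)
      exact le_trans inf_le_right h3
    · obtain ⟨k, hk⟩ : ∃ k, (i : ℕ) = k + 1 := ⟨(i : ℕ) - 1, by omega⟩
      have h3 : Ab i ≤ ⊥ := by
        rw [hk, ← hm]
        exact lcsIn_mono hH (by omega)
      exact le_trans inf_le_left h3
  rw [_root_.nilpotent_iff_lowerCentralSeries]
  refine ⟨m + m' + 1, ?_⟩
  have := hclaim (m + m' + 1)
  rw [hEbot, le_bot_iff, Subgroup.map_eq_bot_iff, Subgroup.ker_subtype, le_bot_iff] at this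
  exact this

end Part4

section Part5
open Subgroup

variable {G : Type u} [Group G]

lemma fittingSubgroup_is_normal : (fittingSubgroup G).Normal :=
  _root_.sSup_normal _ fun _ hH => hH.1

lemma fittingSubgroup_isNilpotent [Finite G] :
    Group.IsNilpotent ↥(fittingSubgroup G) := by
  have hfin : Finite (Subgroup G) :=
    Finite.of_injective (fun H => (H : Set G)) SetLike.coe_injective
  have key : ∀ s : Set (Subgroup G), s.Finite →
      (∀ H ∈ s, H.Normal ∧ Group.IsNilpotent ↥H) →
      (sSup s).Normal ∧ Group.IsNilpotent ↥(sSup s) := by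
    intro s hs
    refine Set.Finite.induction_on
      (motive := fun (s : Set (Subgroup G)) _ => (∀ H ∈ s, H.Normal ∧ Group.IsNilpotent ↥H) →
        (sSup s).Normal ∧ Group.IsNilpotent ↥(sSup s)) s hs ?_ ?_
    ·
      intro _
      rw [sSup_empty]
      constructor
      · exact ⟨fun n hn g => by simp only [Subgroup.mem_bot] at hn; simp [hn]⟩
      · have : Subsingleton ↥(⊥ : Subgroup G) := by
          constructor
          rintro ⟨a, ha⟩ ⟨b, hb⟩
          rw [Subgroup.mem_bot] at ha hb
          simp [ha, hb]
        exact Group.isNilpotent_of_subsingleton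
    · intro a t hat htfin ih hmem
      have hP : ∀ H ∈ t, H.Normal ∧ Group.IsNilpotent ↥H := fun H hH =>
        hmem H (Set.mem_insert_of_mem a hH)
      obtain ⟨hn, hnil⟩ := ih hP
      have ha := hmem a (Set.mem_insert a t)
      rw [sSup_insert]
      exact ⟨@Subgroup.sup_normal _ _ a (sSup t) ha.1 hn,
        isNilpotent_sup_of_normal ha.1 hn ha.2 hnil⟩
  exact (key _ (Set.toFinite _) (fun H hH => hH)).2

lemma mem_fittingSubgroup {H : Subgroup G} (hn : H.Normal)
    (hnil : Group.IsNilpotent ↥H) {x : G} (hx : x ∈ H) : x ∈ fittingSubgroup G := by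
  have hle : H ≤ fittingSubgroup G :=
    le_sSup (show H ∈ {K : Subgroup G | K.Normal ∧ Group.IsNilpotent ↥K} from ⟨hn, hnil⟩)
  exact hle hx

lemma isSubnormal_map_conj {Q : Subgroup G} (h : _root_.IsSubnormal Q) (g : G) :
    _root_.IsSubnormal (Q.map (MulAut.conj g).toMonoidHom) := by
  obtain ⟨n, c, hc0, hcn, hch⟩ := h
  refine ⟨n, fun i => (c i).map (MulAut.conj g).toMonoidHom,
    (by show (c 0).map _ = _; rw [hc0]), ?_, ?_⟩
  · show (c n).map (MulAut.conj g).toMonoidHom = ⊤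
    rw [hcn]
    exact Subgroup.map_top_of_surjective _ (MulAut.conj g).surjective
  · intro i hi
    exact ⟨Subgroup.map_mono (hch i hi).1,
      subgroupOf_map_conj_normal (hch i hi).1 (hch i hi).2⟩

lemma map_eq_of_eqOn {H : Subgroup G} {f g : G →* G} (h : ∀ a ∈ H, f a = g a) :
    H.map f = H.map g := by
  ext b
  constructor
  · rintro ⟨a, ha, rfl⟩
    exact ⟨a, ha, (h a ha).symm⟩
  · rintro ⟨a, ha, rfl⟩
    exact ⟨a, ha, h a ha⟩

end Part5


/-- **Lemma.** Let `N` be a soluble normal subgroup of a finite group `G`.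
If `x ∈ F*(G)`, then `x ∈ F(N⟨x⟩)`. -/
theorem mem_fittingSubgroup_of_mem_genFitting
    (G : Type u) [Group G] [Finite G] (N : Subgroup G) (hN : N.Normal)
    (hsol : IsSolvable ↥N) (x : G) (hx : x ∈ genFitting G) :
    x ∈ (fittingSubgroup ↥(N ⊔ Subgroup.zpowers x)).map
      (N ⊔ Subgroup.zpowers x).subtype := by
  classical
  have hFnorm : (fittingSubgroup G).Normal := fittingSubgroup_is_normal
  have hFnil : Group.IsNilpotent ↥(fittingSubgroup G) := fittingSubgroup_isNilpotent
  set F := fittingSubgroup G with hFdef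
  set S₂ : Set G := {w | ∃ Q : Subgroup G, IsSubnormal Q ∧ IsQuasisimple ↥Q ∧ w ∈ Q} with hS₂
  set E := Subgroup.closure S₂ with hEdef
  have hS₂conj : ∀ g : G, (MulAut.conj g).toMonoidHom '' S₂ ⊆ S₂ := by
    rintro g - ⟨s, ⟨Q, hQsub, hQq, hsQ⟩, rfl⟩
    exact ⟨Q.map (MulAut.conj g).toMonoidHom, isSubnormal_map_conj hQsub g,
      isQuasisimple_of_mulEquiv
        (Subgroup.equivMapOfInjective Q _ (MulAut.conj g).injective) hQq,
      ⟨s, hsQ, rfl⟩⟩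
  have hmaple : ∀ g : G, E.map (MulAut.conj g).toMonoidHom ≤ E := by
    intro g
    rw [hEdef, MonoidHom.map_closure]
    exact le_trans (Subgroup.closure_mono (hS₂conj g)) (le_refl _)
  have hEnorm : E.Normal := by
    constructor
    intro a ha g
    exact hmaple g ⟨a, ha, rfl⟩
  have hEcent : ∀ e ∈ E, ∀ a ∈ N, e * a = a * e := by
    have hle : E ≤ Subgroup.centralizer (N : Set G) := by
      rw [hEdef]
      apply (Subgroup.closure_le _).mpr
      rintro s ⟨Q, hQsub, hQq, hsQ⟩
      rw [SetLike.mem_coe, Subgroup.mem_centralizer_iff]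
      intro h hh
      exact (commute_of_mem_subnormal_quasisimple hQsub hQq hN hsol s hsQ h hh).symm
    intro e he a ha
    exact (Subgroup.mem_centralizer_iff.mp (hle he) a ha).symm
  haveI := hFnorm
  haveI := hEnorm
  have hgen : genFitting G ≤ F ⊔ E := by
    apply Subgroup.normalClosure_le_normal
    rintro w (hwF | hwS)
    · exact Subgroup.mem_sup_left hwF
    · exact Subgroup.mem_sup_right (Subgroup.subset_closure hwS)
  have hxFE : x ∈ ((F : Set G) * (E : Set G)) := by
    rw [← Subgroup.normal_mul F E]
    exact hgen hx
  obtain ⟨y, hyF, z, hzE, hxyz⟩ := hxFE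
  have hzN : ∀ a ∈ N, z * a = a * z := fun a ha => hEcent z hzE a ha
  set H := N ⊔ Subgroup.zpowers x with hHdef
  have hxH : x ∈ H := Subgroup.mem_sup_right (Subgroup.mem_zpowers x)
  set F₀ := F ⊓ N with hF₀def
  have hF₀norm : F₀.Normal := @Subgroup.normal_inf_normal _ _ F N hFnorm hN
  haveI := hF₀norm
  have hF₀F : F₀ ≤ F := inf_le_left
  have hF₀N : F₀ ≤ N := inf_le_right
  set R := F₀ ⊔ Subgroup.zpowers y with hRdef
  have hRF : R ≤ F := sup_le hF₀F (Subgroup.zpowers_le.mpr hyF)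
  have hRnil : Group.IsNilpotent ↥R := by
    haveI : Group.IsNilpotent ↥(R.subgroupOf F) := by
      haveI := hFnil
      infer_instance
    exact nilpotent_of_mulEquiv (Subgroup.subgroupOfEquivOfLe hRF)
  -- conjugation by x agrees with conjugation by y on N
  have hyx : ∀ a ∈ N, x * a * x⁻¹ = y * a * y⁻¹ := by
    intro a ha
    rw [← hxyz]
    have hzz : z * a * z⁻¹ = a := by
      rw [hzN a ha]; group
    calc y * z * a * (y * z)⁻¹ = y * (z * a * z⁻¹) * y⁻¹ := by group
    _ = y * a * y⁻¹ := by rw [hzz]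
  have hnat : ∀ n : ℕ, ∀ a ∈ N, x ^ n * a * (x ^ n)⁻¹ = y ^ n * a * (y ^ n)⁻¹ := by
    intro n
    induction n with
    | zero => intro a _; simp
    | succ n ih =>
      intro a ha
      have hb : y ^ n * a * (y ^ n)⁻¹ ∈ N := hN.conj_mem a ha (y ^ n)
      have h1 : x ^ (n + 1) * a * (x ^ (n + 1))⁻¹ = x * (x ^ n * a * (x ^ n)⁻¹) * x⁻¹ := by
        rw [pow_succ']; group
      have h2 : y ^ (n + 1) * a * (y ^ (n + 1))⁻¹ = y * (y ^ n * a * (y ^ n)⁻¹) * y⁻¹ := by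
        rw [pow_succ']; group
      rw [h1, h2, ih a ha, hyx _ hb]
  have hint : ∀ i : ℤ, ∀ a ∈ N, x ^ i * a * (x ^ i)⁻¹ = y ^ i * a * (y ^ i)⁻¹ := by
    intro i a ha
    rcases Int.eq_nat_or_neg i with ⟨n, rfl | rfl⟩
    · rw [zpow_natCast x n, zpow_natCast y n]
      exact hnat n a ha
    · have hbN : (x ^ n)⁻¹ * a * x ^ n ∈ N := by
        have := hN.conj_mem a ha (x ^ n)⁻¹
        simpa using this
      have h3 := hnat n _ hbN
      have h4 : x ^ n * ((x ^ n)⁻¹ * a * x ^ n) * (x ^ n)⁻¹ = a := by group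
      rw [h4] at h3
      -- h3 : a = y^n * ((x^n)⁻¹ * a * x^n) * (y^n)⁻¹
      have h5 : (y ^ n)⁻¹ * a * y ^ n = (x ^ n)⁻¹ * a * x ^ n := by
        conv_lhs => rw [h3]
        group
      rw [zpow_neg x (↑n), zpow_neg y (↑n), zpow_natCast x n, zpow_natCast y n,
        inv_inv, inv_inv]
      exact h5.symm
  -- the auxiliary chain
  set KS : ℕ → Subgroup G := fun j => Nat.rec F₀ (fun _ P => ⁅P, R⁆) j with hKSdef
  have hKSsucc : ∀ j, KS (j + 1) = ⁅KS j, R⁆ := fun j => rfl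
  have hI : ∀ j, KS j ≤ F₀ ∧ (∀ g ∈ R, (KS j).map (MulAut.conj g).toMonoidHom = KS j) ∧
      (KS j).map (MulAut.conj x).toMonoidHom = KS j := by
    intro j
    induction j with
    | zero =>
      exact ⟨le_refl _, fun g _ => map_conj_of_normal hF₀norm g, map_conj_of_normal hF₀norm x⟩
    | succ j ih =>
      obtain ⟨h1, h2, _⟩ := ih
      have hle : ⁅KS j, R⁆ ≤ KS j := by
        rw [Subgroup.commutator_le]
        intro k hk r hr
        have hk' : r * k⁻¹ * r⁻¹ ∈ KS j := by
          rw [← h2 r hr]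
          exact ⟨k⁻¹, (KS j).inv_mem hk, by simp [MulAut.conj_apply]⟩
        have hid : ⁅k, r⁆ = k * (r * k⁻¹ * r⁻¹) := by group
        rw [hid]
        exact (KS j).mul_mem hk hk'
      have hmapR : ∀ g ∈ R, (KS (j + 1)).map (MulAut.conj g).toMonoidHom = KS (j + 1) := by
        intro g hg
        rw [hKSsucc, Subgroup.map_commutator, h2 g hg, map_conj_self hg]
      have hsubN : KS (j + 1) ≤ N := le_trans (le_trans (hKSsucc j ▸ hle) h1) hF₀N
      have heq : (KS (j + 1)).map (MulAut.conj x).toMonoidHom =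
          (KS (j + 1)).map (MulAut.conj y).toMonoidHom := by
        apply map_eq_of_eqOn
        intro a ha
        have := hyx a (hsubN ha)
        simpa [MulAut.conj_apply] using this
      refine ⟨le_trans (hKSsucc j ▸ hle) h1, hmapR, ?_⟩
      rw [heq]
      exact hmapR y (Subgroup.mem_sup_right (Subgroup.mem_zpowers y))
  have hKSL : ∀ j, KS j ≤ lcsIn R j := by
    intro j
    induction j with
    | zero => exact le_sup_left
    | succ j ih => exact Subgroup.commutator_mono ih (le_refl R)
  obtain ⟨m, hm⟩ := lcsIn_eventually_bot hRnil
  have hKSbot : KS m = ⊥ := le_bot_iff.mp (hm ▸ hKSL m)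
  -- the subgroup M
  set M := F₀ ⊔ Subgroup.zpowers x with hMdef
  have hMH : M ≤ H := sup_le (le_trans hF₀N le_sup_left) le_sup_right
  have hxM : x ∈ M := Subgroup.mem_sup_right (Subgroup.mem_zpowers x)
  have hu : ∀ n ∈ N, n * x * n⁻¹ * x⁻¹ ∈ F₀ := by
    intro n hn
    have h1 : n * x * n⁻¹ * x⁻¹ = n * y * n⁻¹ * y⁻¹ := by
      rw [← hxyz]
      have hz1 : z * n⁻¹ = n⁻¹ * z := hzN n⁻¹ (N.inv_mem hn)
      calc n * (y * z) * n⁻¹ * (y * z)⁻¹ = n * y * (z * n⁻¹) * z⁻¹ * y⁻¹ := by group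
      _ = n * y * (n⁻¹ * z) * z⁻¹ * y⁻¹ := by rw [hz1]
      _ = n * y * n⁻¹ * y⁻¹ := by group
    rw [h1, Subgroup.mem_inf]
    constructor
    · exact F.mul_mem (hFnorm.conj_mem y hyF n) (F.inv_mem hyF)
    · have := N.mul_mem hn (hN.conj_mem n⁻¹ (N.inv_mem hn) y)
      simpa [mul_assoc] using this
  have hmapstoN : ∀ n ∈ N, ∀ w ∈ M, n * w * n⁻¹ ∈ M := by
    intro n hn w hw
    have hw' : w ∈ ((F₀ : Set G) * (Subgroup.zpowers x : Set G)) := by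
      rw [← Subgroup.normal_mul F₀ (Subgroup.zpowers x)]
      exact hw
    obtain ⟨f, hf, v, hv, rfl⟩ := hw'
    obtain ⟨i, rfl⟩ := hv
    have huxM : n * x * n⁻¹ ∈ M := by
      have hux : n * x * n⁻¹ = (n * x * n⁻¹ * x⁻¹) * x := by group
      rw [hux]
      exact M.mul_mem (Subgroup.mem_sup_left (hu n hn)) hxM
    have hxiM : n * x ^ i * n⁻¹ ∈ M := by
      have hcalc : n * x ^ i * n⁻¹ = (n * x * n⁻¹) ^ i := by
        calc n * x ^ i * n⁻¹ = (MulAut.conj n) (x ^ i) := by simp [MulAut.conj_apply]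
        _ = ((MulAut.conj n) x) ^ i := map_zpow _ x i
        _ = (n * x * n⁻¹) ^ i := by simp [MulAut.conj_apply]
      rw [hcalc]
      exact Subgroup.zpow_mem M huxM i
    have heq2 : n * (f * x ^ i) * n⁻¹ = (n * f * n⁻¹) * (n * x ^ i * n⁻¹) := by group
    rw [heq2]
    exact M.mul_mem (Subgroup.mem_sup_left (hF₀norm.conj_mem f hf n)) hxiM
  have hMnormalizer : H ≤ Subgroup.normalizer (M : Set G) := by
    rw [hHdef]
    apply sup_le
    · intro n hn
      rw [Subgroup.mem_normalizer_iff]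
      intro h
      constructor
      · intro hh
        exact hmapstoN n hn h hh
      · intro hh
        have h9 := hmapstoN n⁻¹ (N.inv_mem hn) _ hh
        have he : n⁻¹ * (n * h * n⁻¹) * n⁻¹⁻¹ = h := by group
        rwa [he] at h9
    · exact Subgroup.zpowers_le.mpr (Subgroup.le_normalizer hxM)
  have hMnormal : (M.subgroupOf H).Normal := by
    constructor
    rintro w hw g
    rw [Subgroup.mem_subgroupOf] at hw ⊢
    have hg := hMnormalizer g.2
    rw [Subgroup.mem_normalizer_iff] at hg
    have h9 := (hg (↑w : G)).mp hw
    simpa using h9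
  -- commutators of M land in F₀
  have hπM : ∀ w ∈ M, (QuotientGroup.mk' F₀) w ∈
      Subgroup.zpowers ((QuotientGroup.mk' F₀) x) := by
    intro w hw
    have h1 : (QuotientGroup.mk' F₀) w ∈ M.map (QuotientGroup.mk' F₀) :=
      Subgroup.mem_map_of_mem _ hw
    rw [hMdef, Subgroup.map_sup] at h1
    have h2 : F₀.map (QuotientGroup.mk' F₀) = ⊥ := by
      rw [Subgroup.map_eq_bot_iff, QuotientGroup.ker_mk']
    have h3 : (Subgroup.zpowers x).map (QuotientGroup.mk' F₀) =
        Subgroup.zpowers ((QuotientGroup.mk' F₀) x) := MonoidHom.map_zpowers _ x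
    rw [h2, h3, bot_sup_eq] at h1
    exact h1
  have hbase : ⁅M, M⁆ ≤ F₀ := by
    rw [Subgroup.commutator_le]
    intro a haM b hbM
    obtain ⟨i, hi⟩ := Subgroup.mem_zpowers_iff.mp (hπM a haM)
    obtain ⟨j, hj⟩ := Subgroup.mem_zpowers_iff.mp (hπM b hbM)
    have h1 : (QuotientGroup.mk' F₀) ⁅a, b⁆ = 1 := by
      rw [map_commutatorElement, ← hi, ← hj, commutatorElement_eq_one_iff_commute]
      exact (Commute.refl _).zpow_zpow i j
    exact (QuotientGroup.eq_one_iff _).mp h1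
  have hstep2 : ∀ j, ⁅KS j, M⁆ ≤ KS (j + 1) := by
    intro j
    rw [Subgroup.commutator_le]
    intro k hk w hwM
    have hw' : w ∈ ((F₀ : Set G) * (Subgroup.zpowers x : Set G)) := by
      rw [← Subgroup.normal_mul F₀ (Subgroup.zpowers x)]
      exact hwM
    obtain ⟨f, hf, v, hv, rfl⟩ := hw'
    obtain ⟨i, rfl⟩ := hv
    have hkN : k ∈ N := hF₀N ((hI j).1 hk)
    have h2 : ⁅k, x ^ i⁆ = ⁅k, y ^ i⁆ := by
      have h3 := hint i k⁻¹ (N.inv_mem hkN)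
      calc ⁅k, x ^ i⁆ = k * (x ^ i * k⁻¹ * (x ^ i)⁻¹) := by group
      _ = k * (y ^ i * k⁻¹ * (y ^ i)⁻¹) := by rw [h3]
      _ = ⁅k, y ^ i⁆ := by group
    have h1 : ⁅k, f⁆ ∈ ⁅KS j, R⁆ :=
      Subgroup.commutator_mem_commutator hk (Subgroup.mem_sup_left hf)
    have h4 : ⁅k, y ^ i⁆ ∈ ⁅KS j, R⁆ :=
      Subgroup.commutator_mem_commutator hk
        (Subgroup.zpow_mem R (Subgroup.mem_sup_right (Subgroup.mem_zpowers y)) i)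
    have h5 : f * ⁅k, x ^ i⁆ * f⁻¹ ∈ ⁅KS j, R⁆ := by
      rw [h2]
      have h6 := (hI (j + 1)).2.1 f (Subgroup.mem_sup_left hf)
      rw [hKSsucc] at h6
      rw [← h6]
      exact ⟨⁅k, y ^ i⁆, h4, by simp [MulAut.conj_apply]; group⟩
    have hid : ⁅k, f * x ^ i⁆ = ⁅k, f⁆ * (f * ⁅k, x ^ i⁆ * f⁻¹) := by group
    rw [hKSsucc, hid]
    exact Subgroup.mul_mem _ h1 h5
  have hγ : ∀ j, Subgroup.map M.subtype ((⊤ : Subgroup ↥M).lowerCentralSeries (j + 1)) ≤ KS j := by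
    intro j
    induction j with
    | zero =>
      show Subgroup.map M.subtype ⁅(⊤ : Subgroup ↥M), ⊤⁆ ≤ F₀
      rw [Subgroup.map_commutator, ← MonoidHom.range_eq_map, M.range_subtype]
      exact hbase
    | succ j ih =>
      show Subgroup.map M.subtype ⁅(⊤ : Subgroup ↥M).lowerCentralSeries (j + 1), ⊤⁆ ≤ KS (j + 1)
      rw [Subgroup.map_commutator, ← MonoidHom.range_eq_map, M.range_subtype]
      exact le_trans (Subgroup.commutator_mono ih (le_refl M))
        (le_trans (hstep2 j) (le_refl _))
  have hMnil : Group.IsNilpotent ↥M := by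
    rw [nilpotent_iff_lowerCentralSeries]
    refine ⟨m + 1, ?_⟩
    have h9 := hγ m
    rw [hKSbot, le_bot_iff, Subgroup.map_eq_bot_iff, Subgroup.ker_subtype, le_bot_iff] at h9
    exact h9
  have hMsubnil : Group.IsNilpotent ↥(M.subgroupOf H) := by
    haveI := hMnil
    exact nilpotent_of_mulEquiv (Subgroup.subgroupOfEquivOfLe hMH).symm
  have hxfit : (⟨x, hxH⟩ : ↥H) ∈ fittingSubgroup ↥H := by
    apply mem_fittingSubgroup hMnormal hMsubnil
    rw [Subgroup.mem_subgroupOf]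
    exact hxM
  exact ⟨⟨x, hxH⟩, hxfit, rfl⟩
end

section
/- Let G be a finite group with upper nonsoluble series 1 = L_0 ≤ M_1 < L_1 ≤ M_2 < … ≤ M_{m+1} = G, where M_k and L_k are defined as follows: M_1 = S(G) is the soluble radical, L_k is the full inverse image in G of F*(G/M_k), and M_{k+1} is the full inverse image in G of the soluble radical of G/L_k. Let N be a normal subgroup of G and K/N a simple subnormal subgroup of G/N. Let D be a subgroup of G such that K = DN, D ≤ L_j N, and D is not contained in M_j N, for some index j. Then [D, D^x] · N · M_j = K · M_j for every x ∈ L_j N, where D^x = x^{-1}Dx. -/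
universe u v

/-! ### Auxiliary development: relative normality and subnormality -/

namespace KS

open Subgroup

variable {G : Type*} [Group G] {G' : Type*} [Group G']

/-- Relative normality: `A` is a normal subgroup of `B`, phrased inside the ambient group. -/
def Rnorm (A B : Subgroup G) : Prop :=
  A ≤ B ∧ ∀ x ∈ B, ∀ a ∈ A, x * a * x⁻¹ ∈ A

/-- Relative subnormal chain of length `n` from `A` up to `B`. -/
def Rsub : ℕ → Subgroup G → Subgroup G → Prop
  | 0, A, B => A = B
  | n + 1, A, B => ∃ C : Subgroup G, Rsub n A C ∧ Rnorm C B

theorem Rnorm.le {A B : Subgroup G} (h : Rnorm A B) : A ≤ B := h.1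

theorem rnorm_self (A : Subgroup G) : Rnorm A A :=
  ⟨le_rfl, fun x hx a ha => A.mul_mem (A.mul_mem hx ha) (A.inv_mem hx)⟩

theorem rnorm_bot (B : Subgroup G) : Rnorm ⊥ B :=
  ⟨bot_le, fun x _ a ha => by
    simp only [Subgroup.mem_bot] at ha ⊢
    simp [ha]⟩

theorem rnorm_top_of_normal {A : Subgroup G} (h : A.Normal) : Rnorm A ⊤ :=
  ⟨le_top, fun x _ a ha => h.conj_mem a ha x⟩

theorem rnorm_inf_right {A B : Subgroup G} (h : Rnorm A B) (M : Subgroup G) :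
    Rnorm (A ⊓ M) (B ⊓ M) :=
  ⟨inf_le_inf_right M h.1, fun x hx a ha =>
    ⟨h.2 x hx.1 a ha.1, M.mul_mem (M.mul_mem hx.2 ha.2) (M.inv_mem hx.2)⟩⟩

theorem Rsub.le : ∀ {n : ℕ} {A B : Subgroup G}, Rsub n A B → A ≤ B
  | 0, _, _, h => le_of_eq h
  | _ + 1, _, _, ⟨_, h1, h2⟩ => h1.le.trans h2.le

theorem rsub_cons {A B H : Subgroup G} (h : Rnorm A B) :
    ∀ {n : ℕ}, Rsub n B H → Rsub (n + 1) A H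
  | 0, hBH => ⟨A, rfl, hBH ▸ h⟩
  | n + 1, ⟨C, h1, h2⟩ => ⟨C, rsub_cons h h1, h2⟩

theorem rsub_inf_right {M : Subgroup G} :
    ∀ {n : ℕ} {A B : Subgroup G}, Rsub n A B → Rsub n (A ⊓ M) (B ⊓ M)
  | 0, _, _, h => by rw [Rsub, h]
  | _ + 1, _, _, ⟨C, h1, h2⟩ => ⟨C ⊓ M, rsub_inf_right h1, rnorm_inf_right h2 M⟩

theorem rnorm_map (f : G →* G') {A B : Subgroup G} (h : Rnorm A B) :
    Rnorm (A.map f) (B.map f) := by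
  refine ⟨Subgroup.map_mono h.1, ?_⟩
  rintro x ⟨b, hb, rfl⟩ a ⟨a', ha', rfl⟩
  exact ⟨b * a' * b⁻¹, h.2 b hb a' ha', by simp⟩

theorem rsub_map (f : G →* G') :
    ∀ {n : ℕ} {A B : Subgroup G}, Rsub n A B → Rsub n (A.map f) (B.map f)
  | 0, _, _, h => by rw [Rsub, h]
  | _ + 1, _, _, ⟨C, h1, h2⟩ => ⟨C.map f, rsub_map f h1, rnorm_map f h2⟩

theorem rnorm_of_subgroupOf {A B : Subgroup G} (hle : A ≤ B)
    (h : ((A.subgroupOf B)).Normal) : Rnorm A B := by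
  refine ⟨hle, fun x hx a ha => ?_⟩
  have := h.conj_mem ⟨a, hle ha⟩ (by rwa [Subgroup.mem_subgroupOf]) ⟨x, hx⟩
  rwa [Subgroup.mem_subgroupOf] at this

theorem subgroupOf_normal_of_rnorm {A B : Subgroup G} (h : Rnorm A B) :
    ((A.subgroupOf B)).Normal := by
  constructor
  intro a ha b
  rw [Subgroup.mem_subgroupOf] at ha ⊢
  exact h.2 b b.2 a ha

private theorem rsub_of_chain :
    ∀ (n : ℕ) (c : ℕ → Subgroup G),
      (∀ i, i < n → Rnorm (c i) (c (i + 1))) → Rsub n (c 0) (c n)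
  | 0, _, _ => rfl
  | n + 1, c, h => ⟨c n, rsub_of_chain n c (fun i hi => h i (hi.trans (Nat.lt_succ_self n))),
      h n (Nat.lt_succ_self n)⟩

theorem rsub_of_isSubnormal {K : Subgroup G} (h : _root_.IsSubnormal K) : ∃ n, Rsub n K ⊤ := by
  obtain ⟨n, c, h0, hn, hstep⟩ := h
  refine ⟨n, ?_⟩
  have := rsub_of_chain n c (fun i hi => rnorm_of_subgroupOf (hstep i hi).1 (hstep i hi).2)
  rwa [h0, hn] at this

theorem isSubnormal_of_rsub : ∀ {n : ℕ} {A B : Subgroup G}, Rsub n A B →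
    ∃ c : ℕ → Subgroup G, c 0 = A ∧ c n = B ∧
      ∀ i, i < n → c i ≤ c (i + 1) ∧ ((c i).subgroupOf (c (i + 1))).Normal := by
  intro n
  induction n with
  | zero => exact fun {A B} h => ⟨fun _ => A, rfl, h.symm ▸ rfl, fun i hi => absurd hi (Nat.not_lt_zero i)⟩
  | succ n ih =>
    rintro A B ⟨C, h1, h2⟩
    obtain ⟨c, hc0, hcn, hstep⟩ := ih h1
    refine ⟨fun i => if i ≤ n then c i else B, by simpa using hc0, by simp, ?_⟩
    intro i hi
    dsimp only
    rcases lt_or_eq_of_le (Nat.lt_succ_iff.mp hi) with hlt | heq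
    · have h1' : i ≤ n := le_of_lt hlt
      have h2' : i + 1 ≤ n := hlt
      have key : ∀ X Y : Subgroup G, X = c i → Y = c (i + 1) → X ≤ Y ∧ (X.subgroupOf Y).Normal := by
        rintro X Y rfl rfl; exact hstep i hlt
      exact key _ _ (if_pos h1') (if_pos h2')
    · subst heq
      have hne : ¬ (i + 1 ≤ i) := by omega
      have key : ∀ X Y : Subgroup G, X = C → Y = B → X ≤ Y ∧ (X.subgroupOf Y).Normal := by
        rintro X Y rfl rfl; exact ⟨h2.le, subgroupOf_normal_of_rnorm h2⟩
      exact key _ _ ((if_pos (le_refl i)).trans hcn) (if_neg hne)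

theorem isSubnormal_of_rsub_top {n : ℕ} {A : Subgroup G} (h : Rsub n A ⊤) : _root_.IsSubnormal A := by
  obtain ⟨c, h0, hn, hs⟩ := isSubnormal_of_rsub h
  exact ⟨n, c, h0, hn, hs⟩

end KS
namespace KS

open Subgroup

variable {G : Type*} [Group G] {G' : Type*} [Group G']

/-- A relative form of quasisimplicity: `T` is perfect, and every subgroup of `T`
normalized by `T` is either all of `T` or centralized by `T`. -/
def Quasi (T : Subgroup G) : Prop :=
  ⁅T, T⁆ = T ∧ ∀ N : Subgroup G, Rnorm N T → N = T ∨ ⁅T, N⁆ = ⊥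

theorem comm_of_commutator_bot {A B : Subgroup G} (h : ⁅A, B⁆ = ⊥)
    {a b : G} (ha : a ∈ A) (hb : b ∈ B) : a * b = b * a := by
  have := Subgroup.commutator_eq_bot_iff_le_centralizer.mp h ha
  exact (Subgroup.mem_centralizer_iff.mp this b hb).symm

theorem commutator_bot_of_comm {A B : Subgroup G}
    (h : ∀ a ∈ A, ∀ b ∈ B, a * b = b * a) : ⁅A, B⁆ = ⊥ :=
  Subgroup.commutator_eq_bot_iff_le_centralizer.mpr fun a ha =>
    Subgroup.mem_centralizer_iff.mpr fun b hb => (h a ha b hb).symm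

theorem quasi_bot : Quasi (⊥ : Subgroup G) :=
  ⟨Subgroup.commutator_bot_left ⊥, fun N hN => Or.inl (le_antisymm hN.le bot_le)⟩

/-- **Wielandt-style lemma, normal target case.** -/
theorem wielandt_normal :
    ∀ (d : ℕ) (S N H : Subgroup G), Quasi S → Rsub d S H → Rnorm N H →
      S ≤ N ∨ ⁅S, N⁆ = ⊥ := by
  intro d
  induction d with
  | zero =>
    intro S N H hq hsub hN
    rw [Rsub] at hsub
    subst hsub
    rcases hq.2 N hN with h | h
    · exact Or.inl (le_of_eq h.symm)
    · exact Or.inr h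
  | succ d ih =>
    rintro S N H hq ⟨H', hSH', hH'H⟩ hN
    have hNH' : Rnorm (N ⊓ H') H' :=
      ⟨inf_le_right, fun x hx a ha =>
        ⟨hN.2 x (hH'H.le hx) a ha.1, H'.mul_mem (H'.mul_mem hx ha.2) (H'.inv_mem hx)⟩⟩
    rcases ih S (N ⊓ H') H' hq hSH' hNH' with h | h
    · exact Or.inl (h.trans inf_le_left)
    · -- ⁅S,N⁆ ≤ N ⊓ H'
      have hSN : ⁅S, N⁆ ≤ N ⊓ H' := by
        rw [Subgroup.commutator_le]
        intro g₁ hg₁ g₂ hg₂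
        constructor
        · exact N.mul_mem (hN.2 g₁ (hH'H.le (hSH'.le hg₁)) g₂ hg₂) (N.inv_mem hg₂)
        · have hmem : g₂ * g₁⁻¹ * g₂⁻¹ ∈ H' :=
            hH'H.2 g₂ (hN.le hg₂) g₁⁻¹ (H'.inv_mem (hSH'.le hg₁))
          have : g₁ * g₂ * g₁⁻¹ * g₂⁻¹ = g₁ * (g₂ * g₁⁻¹ * g₂⁻¹) := by group
          rw [commutatorElement_def, this]
          exact H'.mul_mem (hSH'.le hg₁) hmem
      have h1 : ⁅⁅S, N⁆, S⁆ = ⊥ := by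
        rw [eq_bot_iff]
        exact le_trans (Subgroup.commutator_mono hSN le_rfl)
          (le_of_eq ((Subgroup.commutator_comm _ _).trans h))
      have h2 : ⁅⁅N, S⁆, S⁆ = ⊥ := by rwa [Subgroup.commutator_comm N S]
      have h3 := Subgroup.commutator_commutator_eq_bot_of_rotate h1 h2
      rw [hq.1] at h3
      exact Or.inr h3

/-- **Wielandt-style lemma.** A relatively quasisimple subnormal subgroup either lies in a
given subnormal subgroup or commutes with it. -/
theorem wielandt :
    ∀ (e : ℕ) {d : ℕ} (S B H : Subgroup G), Quasi S → Rsub d S H → Rsub e B H →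
      S ≤ B ∨ ⁅S, B⁆ = ⊥ := by
  intro e
  induction e with
  | zero =>
    intro d S B H hq hS hB
    rw [Rsub] at hB
    exact Or.inl (hB ▸ hS.le)
  | succ e ih =>
    rintro d S B H hq hS ⟨M, hBM, hMH⟩
    rcases wielandt_normal d S M H hq hS hMH with h | h
    · have hSM : Rsub d S M := by
        have := rsub_inf_right (M := M) hS
        rwa [inf_eq_left.mpr h, inf_eq_right.mpr hMH.le] at this
      exact ih S B M hq hSM hBM
    · exact Or.inr (le_bot_iff.mp (le_trans (Subgroup.commutator_mono le_rfl hBM.le) h.le))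

theorem quasi_map (f : G →* G') {T : Subgroup G} (h : Quasi T) : Quasi (T.map f) := by
  constructor
  · rw [← Subgroup.map_commutator, h.1]
  · intro N hN
    set N₀ : Subgroup G := T ⊓ Subgroup.comap f N with hN₀
    have hrn : Rnorm N₀ T := by
      refine ⟨inf_le_left, fun x hx a ha => ?_⟩
      refine ⟨T.mul_mem (T.mul_mem hx ha.1) (T.inv_mem hx), ?_⟩
      have := hN.2 (f x) ⟨x, hx, rfl⟩ (f a) ha.2
      simpa [Subgroup.mem_comap] using this
    have hmap : Subgroup.map f N₀ ≤ N := (Subgroup.map_mono inf_le_right).trans (Subgroup.map_comap_le f N)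
    rcases h.2 N₀ hrn with h' | h'
    · refine Or.inl (le_antisymm hN.le ?_)
      rw [← h']
      exact hmap
    · refine Or.inr (le_bot_iff.mp ?_)
      have hNle : N ≤ Subgroup.map f N₀ := by
        intro a ha
        obtain ⟨t, ht, rfl⟩ := hN.le ha
        exact ⟨t, ⟨ht, ha⟩, rfl⟩
      refine le_trans (Subgroup.commutator_mono le_rfl hNle) (le_of_eq ?_)
      rw [← Subgroup.map_commutator, h', Subgroup.map_bot]

/-- Relative simplicity dichotomy. -/
def Rdich (K : Subgroup G) : Prop := ∀ N : Subgroup G, Rnorm N K → N = ⊥ ∨ N = K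

theorem rdich_of_isSimpleGroup {K : Subgroup G} (h : IsSimpleGroup ↥K) : Rdich K := by
  intro N hN
  rcases h.eq_bot_or_eq_top_of_normal (N.subgroupOf K) (subgroupOf_normal_of_rnorm hN) with h' | h'
  · refine Or.inl (eq_bot_iff.mpr fun n hn => ?_)
    have : (⟨n, hN.le hn⟩ : ↥K) ∈ N.subgroupOf K := by rwa [Subgroup.mem_subgroupOf]
    rw [h', Subgroup.mem_bot] at this
    simpa [Subgroup.mem_bot] using congrArg Subtype.val this
  · refine Or.inr (le_antisymm hN.le fun k hk => ?_)
    have : (⟨k, hk⟩ : ↥K) ∈ N.subgroupOf K := h' ▸ Subgroup.mem_top _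
    rwa [Subgroup.mem_subgroupOf] at this

theorem rdich_map (f : G →* G') {K : Subgroup G} (h : Rdich K) : Rdich (K.map f) := by
  intro N hN
  set N₀ : Subgroup G := K ⊓ Subgroup.comap f N with hN₀
  have hrn : Rnorm N₀ K := by
    refine ⟨inf_le_left, fun x hx a ha => ?_⟩
    refine ⟨K.mul_mem (K.mul_mem hx ha.1) (K.inv_mem hx), ?_⟩
    have := hN.2 (f x) ⟨x, hx, rfl⟩ (f a) ha.2
    simpa [Subgroup.mem_comap] using this
  rcases h N₀ hrn with h' | h'
  · refine Or.inl (eq_bot_iff.mpr fun a ha => ?_)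
    obtain ⟨t, ht, rfl⟩ := hN.le ha
    have : t ∈ N₀ := ⟨ht, ha⟩
    rw [h', Subgroup.mem_bot] at this
    simp [this]
  · refine Or.inr (le_antisymm hN.le ?_)
    rw [← h']
    exact (Subgroup.map_mono inf_le_right).trans (Subgroup.map_comap_le f N)

theorem rdich_of_quasi_centerless {T : Subgroup G} (hq : Quasi T)
    (hc : T ⊓ Subgroup.centralizer (T : Set G) = ⊥) : Rdich T := by
  intro N hN
  rcases hq.2 N hN with h | h
  · exact Or.inr h
  · refine Or.inl (eq_bot_iff.mpr fun n hn => ?_)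
    rw [← hc]
    refine ⟨hN.le hn, Subgroup.mem_centralizer_iff.mpr fun t ht => ?_⟩
    exact comm_of_commutator_bot h ht hn

theorem eq_bot_of_perfect_solvable {T : Subgroup G} (hp : ⁅T, T⁆ = T)
    (hs : IsSolvable ↥T) : T = ⊥ := by
  have hmap : ∀ n : ℕ, Subgroup.map T.subtype (derivedSeries ↥T n) = T := by
    intro n
    induction n with
    | zero =>
      show Subgroup.map T.subtype ⊤ = T
      rw [← MonoidHom.range_eq_map, Subgroup.range_subtype]
    | succ n ih => rw [derivedSeries_succ, Subgroup.map_commutator, ih, hp]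
  obtain ⟨n, hn⟩ := hs.solvable
  have := hmap n
  rw [hn, Subgroup.map_bot] at this
  exact this.symm

theorem isSolvable_of_abelian {T : Subgroup G}
    (h : ∀ a ∈ T, ∀ b ∈ T, a * b = b * a) : IsSolvable ↥T :=
  isSolvable_of_comm fun a b => Subtype.ext (h a a.2 b b.2)

theorem isSolvable_of_le {A B : Subgroup G} (h : A ≤ B) (hs : IsSolvable ↥B) :
    IsSolvable ↥A := by
  haveI : Group.IsSolvable ↥B := hs
  exact solvable_of_solvable_injective (Subgroup.inclusion_injective h)

theorem isSolvable_of_mulEquiv {H H' : Type*} [Group H] [Group H'] (e : H ≃* H')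
    (hs : IsSolvable H) : IsSolvable H' := by
  haveI : Group.IsSolvable H := hs
  exact solvable_of_surjective (f := e.toMonoidHom) e.surjective

end KS
namespace KS

open Subgroup
open scoped commutatorElement

variable {G : Type*} [Group G] {G' : Type*} [Group G']

private theorem comm_central_left {H : Type*} [Group H] {z : H}
    (hz : ∀ g, g * z = z * g) (n m : H) : ⁅n * z, m⁆ = ⁅n, m⁆ := by
  have h1 : n * z * m * (n * z)⁻¹ * m⁻¹ = n * (z * m * z⁻¹) * n⁻¹ * m⁻¹ := by group
  rw [commutatorElement_def, commutatorElement_def, h1, ← hz m]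
  group

private theorem comm_central_right {H : Type*} [Group H] {w : H}
    (hw : ∀ g, g * w = w * g) (n m : H) : ⁅n, m * w⁆ = ⁅n, m⁆ := by
  have h1 : n * (m * w) * n⁻¹ * (m * w)⁻¹ = n * m * (w * n⁻¹ * w⁻¹) * m⁻¹ := by group
  rw [commutatorElement_def, commutatorElement_def, h1, ← hw n⁻¹]
  group

theorem quasi_of_isQuasisimple {Q : Subgroup G} (h : IsQuasisimple ↥Q) : Quasi Q := by
  obtain ⟨hperf, hsimp, _⟩ := h
  have h0 : Subgroup.map Q.subtype ⊤ = Q := by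
    rw [← MonoidHom.range_eq_map, Subgroup.range_subtype]
  have hperf' : ⁅Q, Q⁆ = Q := by
    have := congrArg (Subgroup.map Q.subtype) hperf
    rwa [commutator_def, Subgroup.map_commutator, h0] at this
  refine ⟨hperf', fun N hN => ?_⟩
  have hle := hN.le
  have hnorm : (N.subgroupOf Q).Normal := subgroupOf_normal_of_rnorm hN
  set Z := Subgroup.center ↥Q with hZ
  have hP : ((N.subgroupOf Q).map (QuotientGroup.mk' Z)).Normal :=
    Subgroup.Normal.map hnorm _ (QuotientGroup.mk'_surjective Z)
  rcases hsimp.eq_bot_or_eq_top_of_normal _ hP with hbot | htop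
  · right
    apply commutator_bot_of_comm
    intro a ha b hb
    have hbQ : b ∈ Q := hle hb
    have hc : (⟨b, hbQ⟩ : ↥Q) ∈ Z := by
      have hmem : (⟨b, hbQ⟩ : ↥Q) ∈ N.subgroupOf Q := by rwa [Subgroup.mem_subgroupOf]
      have h2 : QuotientGroup.mk' Z ⟨b, hbQ⟩ ∈ (N.subgroupOf Q).map (QuotientGroup.mk' Z) :=
        ⟨_, hmem, rfl⟩
      rw [hbot, Subgroup.mem_bot] at h2
      rwa [← QuotientGroup.ker_mk' Z, MonoidHom.mem_ker]
    have := Subgroup.mem_center_iff.mp hc ⟨a, ha⟩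
    exact congrArg Subtype.val this
  · left
    refine le_antisymm hle fun q hq => ?_
    have hdecomp : ∀ a : ↥Q, ∃ n ∈ N.subgroupOf Q, ∃ z ∈ Z, n * z = a := by
      intro a
      have : QuotientGroup.mk' Z a ∈ (N.subgroupOf Q).map (QuotientGroup.mk' Z) := by
        rw [htop]; exact Subgroup.mem_top _
      obtain ⟨n, hn, he⟩ := this
      obtain ⟨z, hz, hza⟩ := (QuotientGroup.mk'_eq_mk' Z).mp he
      exact ⟨n, hn, z, hz, hza⟩
    have hcomm : (⊤ : Subgroup ↥Q) ≤ N.subgroupOf Q := by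
      rw [← hperf, _root_.commutator_def, Subgroup.commutator_le]
      intro a _ b _
      obtain ⟨n, hn, z, hz, rfl⟩ := hdecomp a
      obtain ⟨m, hm, w, hw, rfl⟩ := hdecomp b
      rw [comm_central_left (Subgroup.mem_center_iff.mp hz) n,
        comm_central_right (Subgroup.mem_center_iff.mp hw) n m]
      have h3 : ⁅n, m⁆ = n * (m * n⁻¹ * m⁻¹) := by rw [commutatorElement_def]; group
      rw [h3]
      exact mul_mem hn (hnorm.conj_mem _ (inv_mem hn) m)
    have : (⟨q, hq⟩ : ↥Q) ∈ N.subgroupOf Q := hcomm (Subgroup.mem_top _)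
    rwa [Subgroup.mem_subgroupOf] at this

theorem centerless_map_equiv (e : G ≃* G') {T : Subgroup G}
    (h : T ⊓ Subgroup.centralizer (T : Set G) = ⊥) :
    (T.map e.toMonoidHom) ⊓ Subgroup.centralizer ((T.map e.toMonoidHom : Subgroup G') : Set G') = ⊥ := by
  rw [eq_bot_iff]
  rintro x ⟨hx1, hx2⟩
  obtain ⟨t, ht, rfl⟩ := hx1
  have htc : t ∈ T ⊓ Subgroup.centralizer (T : Set G) := by
    refine ⟨ht, Subgroup.mem_centralizer_iff.mpr fun s hs => ?_⟩
    have := Subgroup.mem_centralizer_iff.mp hx2 (e s) ⟨s, hs, rfl⟩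
    have h2 : e (s * t) = e (t * s) := by simpa [map_mul] using this
    exact e.injective h2
  rw [h, Subgroup.mem_bot] at htc
  simp [htc]

theorem rnorm_conj_map_eq {A B : Subgroup G} (h : Rnorm A B) {x : G} (hx : x ∈ B) :
    A.map (MulAut.conj x).toMonoidHom = A := by
  apply le_antisymm
  · rintro _ ⟨a, ha, rfl⟩
    simpa [MulAut.conj] using h.2 x hx a ha
  · intro a ha
    refine ⟨x⁻¹ * a * x, ?_, by simp [MulAut.conj]; group⟩
    have := h.2 x⁻¹ (B.inv_mem hx) a ha
    simpa using this

theorem map_equiv_top (e : G ≃* G') : (⊤ : Subgroup G).map e.toMonoidHom = ⊤ := by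
  rw [← MonoidHom.range_eq_map]
  exact MonoidHom.range_eq_top_of_surjective _ e.surjective

theorem map_map_symm (e : G ≃* G') (K : Subgroup G) :
    (K.map e.toMonoidHom).map e.symm.toMonoidHom = K := by
  ext x
  constructor
  · rintro ⟨_, ⟨k, hk, rfl⟩, rfl⟩
    simpa using hk
  · intro hx
    exact ⟨e x, ⟨x, hx, rfl⟩, by simp⟩

end KS
namespace KS

open Subgroup Function

variable {G : Type*} [Group G]

theorem mem_sup_of_normalized {X Y : Subgroup G}
    (hXY : ∀ x ∈ X, ∀ y ∈ Y, x * y * x⁻¹ ∈ Y) :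
    ∀ p ∈ X ⊔ Y, ∃ x ∈ X, ∃ y ∈ Y, p = x * y := by
  intro p hp
  rw [Subgroup.sup_eq_closure] at hp
  induction hp using Subgroup.closure_induction with
  | mem z hz =>
    rcases hz with hz | hz
    · exact ⟨z, hz, 1, one_mem _, (mul_one z).symm⟩
    · exact ⟨1, one_mem _, z, hz, (one_mul z).symm⟩
  | one => exact ⟨1, one_mem _, 1, one_mem _, by simp⟩
  | mul p q _ _ ihp ihq =>
    obtain ⟨x₁, hx₁, y₁, hy₁, rfl⟩ := ihp
    obtain ⟨x₂, hx₂, y₂, hy₂, rfl⟩ := ihq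
    refine ⟨x₁ * x₂, X.mul_mem hx₁ hx₂, (x₂⁻¹ * y₁ * x₂) * y₂,
      Y.mul_mem (by simpa using hXY x₂⁻¹ (X.inv_mem hx₂) y₁ hy₁) hy₂, by group⟩
  | inv p _ ihp =>
    obtain ⟨x, hx, y, hy, rfl⟩ := ihp
    exact ⟨x⁻¹, X.inv_mem hx, x * y⁻¹ * x⁻¹, hXY x hx y⁻¹ (Y.inv_mem hy), by group⟩

theorem isSolvable_sup {X Y : Subgroup G} (hX : IsSolvable ↥X) (hY : IsSolvable ↥Y)
    (hXY : ∀ x ∈ X, ∀ y ∈ Y, x * y * x⁻¹ ∈ Y) : IsSolvable ↥(X ⊔ Y) := by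
  set P := X ⊔ Y with hP
  set Y₁ : Subgroup ↥P := Y.subgroupOf P with hY₁def
  have hY₁ : Y₁.Normal := by
    constructor
    intro a ha b
    rw [Subgroup.mem_subgroupOf] at ha ⊢
    obtain ⟨x, hx, y, hy, hxy⟩ := mem_sup_of_normalized hXY (↑b) b.2
    have h1 : y * ↑a * y⁻¹ ∈ Y := Y.mul_mem (Y.mul_mem hy ha) (Y.inv_mem hy)
    have h2 : x * (y * ↑a * y⁻¹) * x⁻¹ ∈ Y := hXY x hx _ h1
    have h3 : ((b * a * b⁻¹ : ↥P) : G) = x * (y * ↑a * y⁻¹) * x⁻¹ := by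
      push_cast
      rw [hxy]
      group
    rw [h3]
    exact h2
  haveI := hY₁
  set φ : ↥X →* ↥P ⧸ Y₁ := (QuotientGroup.mk' Y₁).comp (Subgroup.inclusion le_sup_left) with hφdef
  have hφ : Surjective φ := by
    intro q
    obtain ⟨p, rfl⟩ := QuotientGroup.mk'_surjective Y₁ q
    obtain ⟨x, hx, y, hy, hxy⟩ := mem_sup_of_normalized hXY (↑p) p.2
    refine ⟨⟨x, hx⟩, ?_⟩
    show QuotientGroup.mk' Y₁ (Subgroup.inclusion le_sup_left ⟨x, hx⟩) = QuotientGroup.mk' Y₁ p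
    rw [QuotientGroup.mk'_eq_mk' Y₁]
    refine ⟨⟨y, (le_sup_right : Y ≤ X ⊔ Y) hy⟩, by rwa [Subgroup.mem_subgroupOf], ?_⟩
    apply Subtype.ext
    exact hxy.symm
  haveI : Group.IsSolvable (↥P ⧸ Y₁) := by haveI : Group.IsSolvable ↥X := hX; exact solvable_of_surjective hφ
  haveI : Group.IsSolvable ↥Y₁ :=
    isSolvable_of_mulEquiv (Subgroup.subgroupOfEquivOfLe (le_sup_right : Y ≤ P)).symm hY
  exact solvable_of_ker_le_range Y₁.subtype (QuotientGroup.mk' Y₁)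
    (by rw [QuotientGroup.ker_mk', Subgroup.range_subtype])

/-- The family of soluble subgroups normalized by `H` and contained in `H`. -/
def SolFam (H : Subgroup G) : Set (Subgroup G) := {X | Rnorm X H ∧ IsSolvable ↥X}

/-- The soluble radical of `H`, relative to the ambient group. -/
def radRel (H : Subgroup G) : Subgroup G := sSup (SolFam H)

theorem solFam_bot (H : Subgroup G) : ⊥ ∈ SolFam H :=
  ⟨rnorm_bot H, isSolvable_of_abelian fun a ha b _ => by
    rw [Subgroup.mem_bot] at ha; simp [ha]⟩

theorem solFam_sup {H X Y : Subgroup G} (hX : X ∈ SolFam H) (hY : Y ∈ SolFam H) :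
    X ⊔ Y ∈ SolFam H := by
  have hXY : ∀ x ∈ X, ∀ y ∈ Y, x * y * x⁻¹ ∈ Y := fun x hx y hy =>
    hY.1.2 x (hX.1.le hx) y hy
  constructor
  · constructor
    · exact sup_le hX.1.le hY.1.le
    · intro x hx a ha
      obtain ⟨x₀, hx₀, y₀, hy₀, rfl⟩ := mem_sup_of_normalized hXY a ha
      have e : x * (x₀ * y₀) * x⁻¹ = (x * x₀ * x⁻¹) * (x * y₀ * x⁻¹) := by group
      rw [e]
      exact mul_mem ((le_sup_left : X ≤ X ⊔ Y) (hX.1.2 x hx x₀ hx₀)) ((le_sup_right : Y ≤ X ⊔ Y) (hY.1.2 x hx y₀ hy₀))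
  · exact isSolvable_sup hX.2 hY.2 hXY

instance (priority := low) finiteSubgroup [Finite G] : Finite (Subgroup G) :=
  Finite.of_injective (fun H : Subgroup G => (H : Set G)) SetLike.coe_injective

theorem radRel_mem [Finite G] (H : Subgroup G) : radRel H ∈ SolFam H := by
  have hfin : (SolFam H).Finite := Set.toFinite _
  obtain ⟨M, hM, hmax⟩ : ∃ M ∈ SolFam H, ∀ Y ∈ SolFam H, id M ≤ id Y → id Y ≤ id M := by
    obtain ⟨M, hM, hmax⟩ := Set.Finite.exists_maximalFor id _ hfin ⟨⊥, solFam_bot H⟩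
    exact ⟨M, hM, fun Y hY h => hmax hY h⟩
  have hsup : radRel H = M := by
    refine le_antisymm (sSup_le fun X hX => ?_) (le_sSup hM)
    have h1 := hmax (M ⊔ X) (solFam_sup hM hX) le_sup_left
    simp only [id] at h1
    exact le_sup_right.trans h1.ge
  rw [hsup]
  exact hM

theorem le_radRel {X H : Subgroup G} (h : X ∈ SolFam H) : X ≤ radRel H := le_sSup h

theorem solFam_map_equiv (e : G ≃* G) {H X : Subgroup G} (h : X ∈ SolFam H) :
    X.map e.toMonoidHom ∈ SolFam (H.map e.toMonoidHom) :=
  ⟨rnorm_map e.toMonoidHom h.1,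
    isSolvable_of_mulEquiv (Subgroup.equivMapOfInjective X e.toMonoidHom e.injective) h.2⟩

theorem radRel_map_equiv (e : G ≃* G) (H : Subgroup G) :
    (radRel H).map e.toMonoidHom = radRel (H.map e.toMonoidHom) := by
  have himage : Subgroup.map e.toMonoidHom '' SolFam H = SolFam (H.map e.toMonoidHom) := by
    ext X'
    constructor
    · rintro ⟨X, hX, rfl⟩
      exact solFam_map_equiv e hX
    · intro hX'
      have hmm : (X'.map e.symm.toMonoidHom).map e.toMonoidHom = X' := by
        have := map_map_symm e.symm X'
        rwa [MulEquiv.symm_symm] at this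
      refine ⟨X'.map e.symm.toMonoidHom, ?_, hmm⟩
      have := solFam_map_equiv e.symm hX'
      rwa [map_map_symm e H] at this
  have h1 : Subgroup.map e.toMonoidHom (sSup (SolFam H)) = sSup (Subgroup.map e.toMonoidHom '' SolFam H) := by
    rw [(Subgroup.gc_map_comap e.toMonoidHom).l_sSup, sSup_image]
  rw [radRel, h1, himage, radRel]

end KS
namespace KS

open Subgroup

variable {G : Type*} [Group G]

theorem normal_of_rnorm_top {A : Subgroup G} (h : Rnorm A ⊤) : A.Normal :=
  ⟨fun a ha g => h.2 g trivial a ha⟩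

theorem rsub_solvable_le_radRel [Finite G] :
    ∀ {n : ℕ} {A H : Subgroup G}, Rsub n A H → IsSolvable ↥A → A ≤ radRel H := by
  intro n
  induction n with
  | zero =>
    intro A H h hs
    rw [Rsub] at h
    subst h
    exact le_radRel ⟨rnorm_self A, hs⟩
  | succ n ih =>
    rintro A H ⟨H', hAH', hH'H⟩ hs
    refine (ih hAH' hs).trans (le_radRel ?_)
    refine ⟨⟨(radRel_mem H').1.le.trans hH'H.le, fun x hx a ha => ?_⟩, (radRel_mem H').2⟩
    have hconj : (radRel H').map (MulAut.conj x).toMonoidHom = radRel H' := by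
      rw [radRel_map_equiv (MulAut.conj x) H', rnorm_conj_map_eq hH'H hx]
    rw [← hconj]
    exact ⟨a, ha, rfl⟩

theorem solubleRadical_eq_radRel [Finite G] : solubleRadical G = radRel (⊤ : Subgroup G) := by
  apply le_antisymm
  · haveI : (radRel (⊤ : Subgroup G)).Normal := normal_of_rnorm_top (radRel_mem ⊤).1
    apply Subgroup.normalClosure_le_normal
    rintro x ⟨Hx, hnorm, hsol, hx⟩
    exact le_radRel ⟨rnorm_top_of_normal hnorm, hsol⟩ hx
  · refine sSup_le fun X hX => ?_
    intro x hx
    exact Subgroup.subset_normalClosure ⟨X, normal_of_rnorm_top hX.1, hX.2, hx⟩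

theorem isSolvable_solubleRadical [Finite G] : IsSolvable ↥(solubleRadical G) := by
  rw [solubleRadical_eq_radRel]
  exact (radRel_mem ⊤).2

theorem normal_solvable_le_solubleRadical {H : Subgroup G} (h : H.Normal)
    (hs : IsSolvable ↥H) : H ≤ solubleRadical G := fun x hx =>
  Subgroup.subset_normalClosure ⟨H, h, hs, hx⟩

theorem rsub_solvable_le_solubleRadical [Finite G] {n : ℕ} {A : Subgroup G}
    (h : Rsub n A ⊤) (hs : IsSolvable ↥A) : A ≤ solubleRadical G := by
  rw [solubleRadical_eq_radRel]
  exact rsub_solvable_le_radRel h hs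

end KS
namespace KS

open Subgroup Function

variable (G : Type u) [Group G]

theorem upperM_zero : upperM G 0 = ⊥ := rfl

theorem upperL_zero : upperL G 0 = ⊥ := rfl

theorem upperM_succ (j : ℕ) :
    upperM G (j + 1) =
      (solubleRadical (G ⧸ upperL G j)).comap (QuotientGroup.mk' (upperL G j)) := rfl

theorem upperL_succ (j : ℕ) :
    upperL G (j + 1) =
      (genFitting (G ⧸ upperM G (j + 1))).comap (QuotientGroup.mk' (upperM G (j + 1))) := rfl

variable {G}

theorem upperL_le_upperM_succ (j : ℕ) : upperL G j ≤ upperM G (j + 1) := by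
  rw [upperM_succ]
  intro x hx
  rw [Subgroup.mem_comap]
  have : QuotientGroup.mk' (upperL G j) x = 1 := by
    rw [← MonoidHom.mem_ker, QuotientGroup.ker_mk']
    exact hx
  rw [this]
  exact one_mem _

theorem radical_quot_upperM [Finite G] (j : ℕ) :
    solubleRadical (G ⧸ upperM G (j + 1)) = ⊥ := by
  set L' := upperL G j with hL'
  set M₁ := upperM G (j + 1) with hM₁
  set S₁ := solubleRadical (G ⧸ L') with hS₁
  set St := solubleRadical (G ⧸ M₁) with hSt
  set R₁ := St.comap (QuotientGroup.mk' M₁) with hR₁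
  have hLM : L' ≤ M₁ := upperL_le_upperM_succ j
  set β : G ⧸ L' →* G ⧸ M₁ := QuotientGroup.map L' M₁ (MonoidHom.id G) (by
    intro x hx
    rw [Subgroup.mem_comap]
    exact hLM hx) with hβ
  have hβmk : ∀ g : G, β (QuotientGroup.mk' L' g) = QuotientGroup.mk' M₁ g := fun g =>
    QuotientGroup.map_mk' L' M₁ _ _ g
  have hkerβ : β.ker ≤ S₁ := by
    intro y hy
    obtain ⟨g, rfl⟩ := QuotientGroup.mk'_surjective L' y
    rw [MonoidHom.mem_ker, hβmk] at hy
    have hgM : g ∈ M₁ := by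
      rw [← QuotientGroup.ker_mk' M₁, MonoidHom.mem_ker]
      exact hy
    rw [hM₁, upperM_succ, Subgroup.mem_comap] at hgM
    exact hgM
  set X := R₁.map (QuotientGroup.mk' L') with hX
  have hXnormal : X.Normal := by
    haveI : R₁.Normal := Subgroup.Normal.comap inferInstance _
    exact Subgroup.Normal.map inferInstance _ (QuotientGroup.mk'_surjective L')
  have hXsol : IsSolvable ↥X := by
    -- the restriction of β to X
    set g₀ := (β.domRestrict X).rangeRestrict with hg₀
    have hrange : (β.domRestrict X).range ≤ St := by
      rintro _ ⟨⟨_, ⟨r, hr, rfl⟩⟩, rfl⟩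
      rw [MonoidHom.domRestrict_apply, hβmk]
      exact hr
    haveI hsolrange : Group.IsSolvable ↥(β.domRestrict X).range := by
      haveI := isSolvable_solubleRadical (G := G ⧸ M₁)
      exact isSolvable_of_le hrange this
    haveI hsolker : Group.IsSolvable ↥(β.ker.subgroupOf X) := by
      haveI h0 := isSolvable_solubleRadical (G := G ⧸ L')
      have h1 : IsSolvable ↥(β.ker ⊓ X : Subgroup (G ⧸ L')) :=
        isSolvable_of_le (inf_le_left.trans hkerβ) h0
      have h2 : β.ker.subgroupOf X = (β.ker ⊓ X).subgroupOf X :=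
        (Subgroup.inf_subgroupOf_right β.ker X).symm
      rw [h2]
      exact isSolvable_of_mulEquiv (Subgroup.subgroupOfEquivOfLe inf_le_right).symm h1
    exact solvable_of_ker_le_range (β.ker.subgroupOf X).subtype g₀
      (by rw [MonoidHom.ker_rangeRestrict, MonoidHom.ker_domRestrict, Subgroup.range_subtype])
  have hXle : X ≤ S₁ := normal_solvable_le_solubleRadical hXnormal hXsol
  have hR₁le : R₁ ≤ M₁ := by
    intro r hr
    rw [hM₁, upperM_succ, Subgroup.mem_comap]
    exact hXle ⟨r, hr, rfl⟩
  rw [eq_bot_iff]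
  intro s hs
  obtain ⟨r, hr, rfl⟩ : s ∈ R₁.map (QuotientGroup.mk' M₁) := by
    rw [hR₁, Subgroup.map_comap_eq_self_of_surjective (QuotientGroup.mk'_surjective M₁)]
    exact hs
  have : QuotientGroup.mk' M₁ r = 1 := by
    rw [← MonoidHom.mem_ker, QuotientGroup.ker_mk']
    exact hR₁le hr
  rw [this]
  exact Subgroup.mem_bot.mpr rfl

end KS
namespace KS

open Subgroup Function

variable {G : Type*} [Group G]

/-- The family of relatively quasisimple, subnormal, centerless subgroups. -/
def FamQ (G : Type*) [Group G] : Set (Subgroup G) :=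
  {T | Quasi T ∧ (∃ d, Rsub d T ⊤) ∧ T ⊓ Subgroup.centralizer (T : Set G) = ⊥}

/-- The union of the members of `FamQ`. -/
def famSet (G : Type*) [Group G] : Set G := {x | ∃ T ∈ FamQ G, x ∈ T}

theorem famQ_conj (g : G) {T : Subgroup G} (hT : T ∈ FamQ G) :
    T.map (MulAut.conj g).toMonoidHom ∈ FamQ G := by
  obtain ⟨hq, ⟨d, hd⟩, hc⟩ := hT
  refine ⟨quasi_map _ hq, ⟨d, ?_⟩, centerless_map_equiv (MulAut.conj g) hc⟩
  have := rsub_map (MulAut.conj g).toMonoidHom hd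
  rwa [map_equiv_top (MulAut.conj g)] at this

theorem famSet_conj_subset (g : G) :
    (MulAut.conj g).toMonoidHom '' famSet G ⊆ famSet G := by
  rintro _ ⟨x, ⟨T, hT, hxT⟩, rfl⟩
  exact ⟨T.map (MulAut.conj g).toMonoidHom, famQ_conj g hT, ⟨x, hxT, rfl⟩⟩

theorem closure_famSet_normal : (Subgroup.closure (famSet G)).Normal := by
  constructor
  intro n hn g
  have h1 : g * n * g⁻¹ ∈ (Subgroup.closure (famSet G)).map (MulAut.conj g).toMonoidHom :=
    ⟨n, hn, by simp⟩
  rw [MonoidHom.map_closure] at h1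
  exact Subgroup.closure_mono (famSet_conj_subset g) h1

theorem centralizer_le_normalizer' (T : Subgroup G) :
    Subgroup.centralizer (T : Set G) ≤ Subgroup.normalizer (T : Set G) := by
  intro y hy
  rw [Subgroup.mem_normalizer_iff]
  intro h
  constructor
  · intro hh
    have h1 := Subgroup.mem_centralizer_iff.mp hy h hh
    have he : y * h * y⁻¹ = h := by rw [← h1]; group
    rw [he]; exact hh
  · intro hh
    have h1 := Subgroup.mem_centralizer_iff.mp hy _ hh
    have h3 : y * h = y * (y * h * y⁻¹) := by rw [← h1]; group
    have he : h = y * h * y⁻¹ := mul_left_cancel h3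
    rw [he]; exact hh

theorem isQuasisimple_of_quasi_centerless {T : Subgroup G} (hq : Quasi T)
    (hc : T ⊓ Subgroup.centralizer (T : Set G) = ⊥) (hT : T ≠ ⊥) : IsQuasisimple ↥T := by
  have h0 : Subgroup.map T.subtype ⊤ = T := by
    rw [← MonoidHom.range_eq_map, Subgroup.range_subtype]
  have hcomm : _root_.commutator ↥T = ⊤ := by
    apply Subgroup.map_injective T.subtype_injective
    rw [_root_.commutator_def, Subgroup.map_commutator, h0, hq.1]
  have hZ : Subgroup.center ↥T = ⊥ := by
    rw [eq_bot_iff]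
    intro a ha
    have hac : (a : G) ∈ T ⊓ Subgroup.centralizer (T : Set G) := by
      refine ⟨a.2, Subgroup.mem_centralizer_iff.mpr fun h hh => ?_⟩
      exact congrArg Subtype.val (Subgroup.mem_center_iff.mp ha ⟨h, hh⟩)
    rw [hc, Subgroup.mem_bot] at hac
    rw [Subgroup.mem_bot]
    exact Subtype.ext hac
  obtain ⟨a₀, ha₀⟩ := Subgroup.ne_bot_iff_exists_ne_one.mp hT
  have hmkinj : ∀ u v : ↥T, (u : ↥T ⧸ Subgroup.center ↥T) = (v : ↥T ⧸ Subgroup.center ↥T) → u = v := by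
    intro u v huv
    have := QuotientGroup.eq.mp huv
    rw [hZ, Subgroup.mem_bot] at this
    exact (inv_mul_eq_one.mp this)
  haveI hnt : Nontrivial (↥T ⧸ Subgroup.center ↥T) := by
    refine ⟨⟨(a₀ : ↥T ⧸ Subgroup.center ↥T), 1, fun h => ha₀ ?_⟩⟩
    exact hmkinj a₀ 1 h
  have hsimp : IsSimpleGroup (↥T ⧸ Subgroup.center ↥T) := by
    constructor
    intro P hP
    set C : Subgroup ↥T := P.comap (QuotientGroup.mk' (Subgroup.center ↥T)) with hC
    haveI hCnorm : C.Normal := Subgroup.Normal.comap hP _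
    set C₀ : Subgroup G := C.map T.subtype with hC₀
    have hrn : Rnorm C₀ T := by
      refine ⟨Subgroup.map_subtype_le C, fun x hx a ha => ?_⟩
      obtain ⟨a', ha', rfl⟩ := ha
      exact ⟨⟨x, hx⟩ * a' * ⟨x, hx⟩⁻¹, hCnorm.conj_mem a' ha' ⟨x, hx⟩, rfl⟩
    have hPeq : P = C.map (QuotientGroup.mk' (Subgroup.center ↥T)) :=
      (Subgroup.map_comap_eq_self_of_surjective (QuotientGroup.mk'_surjective _) P).symm
    rcases rdich_of_quasi_centerless hq hc C₀ hrn with h | h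
    · left
      have hCbot : C = ⊥ := by
        rw [eq_bot_iff]
        intro c hcC
        have : (c : G) ∈ C₀ := ⟨c, hcC, rfl⟩
        rw [h, Subgroup.mem_bot] at this
        rw [Subgroup.mem_bot]
        exact Subtype.ext this
      rw [hPeq, hCbot, Subgroup.map_bot]
    · right
      have hCtop : C = ⊤ := by
        rw [eq_top_iff]
        intro t _
        have : (t : G) ∈ C₀ := h.symm ▸ t.2
        obtain ⟨c, hcC, hct⟩ := this
        have : c = t := Subtype.ext hct
        rwa [← this]
      rw [hPeq, hCtop]
      rw [← MonoidHom.range_eq_map]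
      exact MonoidHom.range_eq_top_of_surjective _ (QuotientGroup.mk'_surjective _)
  refine ⟨hcomm, hsimp, ?_⟩
  have hTnonab : ∃ a b : ↥T, a * b ≠ b * a := by
    by_contra h'
    push_neg at h'
    apply hT
    have hsub : T ≤ Subgroup.centralizer (T : Set G) := fun t ht =>
      Subgroup.mem_centralizer_iff.mpr fun h hh => congrArg Subtype.val (h' ⟨h, hh⟩ ⟨t, ht⟩)
    rw [eq_bot_iff, ← hc]
    exact le_inf le_rfl hsub
  obtain ⟨a, b, hab⟩ := hTnonab
  refine ⟨(a : ↥T ⧸ Subgroup.center ↥T), (b : ↥T ⧸ Subgroup.center ↥T), fun h => hab ?_⟩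
  have h1 : ((a * b : ↥T) : ↥T ⧸ Subgroup.center ↥T) = ((b * a : ↥T) : ↥T ⧸ Subgroup.center ↥T) := by
    simpa using h
  exact hmkinj _ _ h1

end KS
namespace KS

open Subgroup Function

variable {G : Type*} [Group G]

theorem genFitting_eq_closure_famSet [Finite G] (hrad : solubleRadical G = ⊥) :
    genFitting G = Subgroup.closure (famSet G) := by
  have hfit : fittingSubgroup G = ⊥ := by
    rw [fittingSubgroup, eq_bot_iff]
    refine sSup_le fun H hH => ?_
    haveI := hH.2
    have hsol : IsSolvable ↥H := (inferInstance : Group.IsSolvable ↥H)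
    have := normal_solvable_le_solubleRadical hH.1 hsol
    rwa [hrad] at this
  apply le_antisymm
  · haveI := closure_famSet_normal (G := G)
    apply Subgroup.normalClosure_le_normal
    rintro x (hx | hx)
    · rw [hfit] at hx
      have : x = 1 := hx
      rw [this]
      exact one_mem _
    · obtain ⟨Q, hsub, hquasi, hxQ⟩ := hx
      obtain ⟨d, hd⟩ := rsub_of_isSubnormal hsub
      refine Subgroup.subset_closure ⟨Q, ⟨quasi_of_isQuasisimple hquasi, ⟨d, hd⟩, ?_⟩, hxQ⟩
      have hZrn : Rnorm (Q ⊓ Subgroup.centralizer (Q : Set G)) Q := by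
        refine ⟨inf_le_left, fun x hx a ha => ?_⟩
        refine ⟨Q.mul_mem (Q.mul_mem hx ha.1) (Q.inv_mem hx),
          Subgroup.mem_centralizer_iff.mpr fun h hh => ?_⟩
        have h1 : x⁻¹ * h * x ∈ Q := Q.mul_mem (Q.mul_mem (Q.inv_mem hx) hh) hx
        have h2 := Subgroup.mem_centralizer_iff.mp ha.2 _ h1
        -- h2 : (x⁻¹ * h * x) * a = a * (x⁻¹ * h * x); want h * (x*a*x⁻¹) = (x*a*x⁻¹) * h
        have h3 : x * ((x⁻¹ * h * x) * a) * x⁻¹ = x * (a * (x⁻¹ * h * x)) * x⁻¹ := by rw [h2]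
        calc h * (x * a * x⁻¹) = x * ((x⁻¹ * h * x) * a) * x⁻¹ := by group
          _ = x * (a * (x⁻¹ * h * x)) * x⁻¹ := h3
          _ = (x * a * x⁻¹) * h := by group
      have habel : IsSolvable ↥(Q ⊓ Subgroup.centralizer (Q : Set G)) :=
        isSolvable_of_abelian fun a ha b hb =>
          (Subgroup.mem_centralizer_iff.mp hb.2 a ha.1)
      have hle := rsub_solvable_le_solubleRadical (rsub_cons hZrn hd) habel
      rw [hrad] at hle
      exact le_bot_iff.mp hle
  · rw [genFitting]
    refine (Subgroup.closure_le _).mpr ?_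
    rintro x ⟨T, ⟨hq, ⟨d, hd⟩, hc⟩, hxT⟩
    by_cases hT : T = ⊥
    · subst hT
      have : x = 1 := hxT
      rw [this]
      exact one_mem _
    · apply Subgroup.subset_normalClosure
      exact Set.mem_union_right _ ⟨T, isSubnormal_of_rsub_top hd, isQuasisimple_of_quasi_centerless hq hc hT, hxT⟩

/-- The image of the semisimple part has trivial "center" in any quotient. -/
theorem ZL {Gt : Type*} [Group Gt] [Finite G] (hrad : solubleRadical G = ⊥) (ρ : G →* Gt) :
    (Subgroup.closure (famSet G)).map ρ ⊓
      Subgroup.centralizer (((Subgroup.closure (famSet G)).map ρ : Subgroup Gt) : Set Gt) = ⊥ := by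
  set L := Subgroup.closure (famSet G) with hL
  set Lt := L.map ρ with hLt
  rw [eq_bot_iff]
  rintro c ⟨hc1, hc2⟩
  have hker : Rnorm ρ.ker ⊤ := rnorm_top_of_normal inferInstance
  have step1 : ∀ T ∈ FamQ G, T ≤ ρ.ker ∨ (⁅T, ρ.ker⁆ = ⊥ ∧ T ⊓ ρ.ker = ⊥) := by
    intro T hT
    obtain ⟨d, hd⟩ := hT.2.1
    rcases wielandt_normal d T ρ.ker ⊤ hT.1 hd hker with h | h
    · exact Or.inl h
    · by_cases hTk : T ≤ ρ.ker
      · exact Or.inl hTk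
      · refine Or.inr ⟨h, ?_⟩
        have hrn : Rnorm (T ⊓ ρ.ker) T := by
          refine ⟨inf_le_left, fun x hx a ha => ?_⟩
          exact ⟨T.mul_mem (T.mul_mem hx ha.1) (T.inv_mem hx),
            (MonoidHom.normal_ker ρ).conj_mem a ha.2 x⟩
        rcases rdich_of_quasi_centerless hT.1 hT.2.2 _ hrn with h' | h'
        · exact h'
        · exact absurd (h' ▸ inf_le_right) hTk
  set X₀ := Subgroup.closure {x | ∃ T ∈ FamQ G, ¬ T ≤ ρ.ker ∧ x ∈ T} with hX₀
  have hLle : L ≤ X₀ ⊔ ρ.ker := by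
    refine (Subgroup.closure_le _).mpr ?_
    rintro x ⟨T, hT, hxT⟩
    by_cases hTk : T ≤ ρ.ker
    · exact (le_sup_right : ρ.ker ≤ X₀ ⊔ ρ.ker) (hTk hxT)
    · exact (le_sup_left : X₀ ≤ X₀ ⊔ ρ.ker) (Subgroup.subset_closure ⟨T, hT, hTk, hxT⟩)
  obtain ⟨w, hw, rfl⟩ := hc1
  obtain ⟨x, hx, k, hk, hwxk⟩ : ∃ x ∈ X₀, ∃ k ∈ ρ.ker, w = x * k :=
    mem_sup_of_normalized (fun a _ k hk => (MonoidHom.normal_ker ρ).conj_mem k hk a) w (hLle hw)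
  have hρw : ρ w = ρ x := by
    rw [hwxk, map_mul, MonoidHom.mem_ker.mp hk, mul_one]
  have hX₀ker : X₀ ≤ Subgroup.centralizer (ρ.ker : Set G) := by
    refine (Subgroup.closure_le _).mpr ?_
    rintro y ⟨T, hT, hTk, hyT⟩
    rcases step1 T hT with h | h
    · exact absurd h hTk
    · exact Subgroup.commutator_eq_bot_iff_le_centralizer.mp h.1 hyT
  have hxcent : ∀ T ∈ FamQ G, ∀ t ∈ T, x * t = t * x := by
    intro T hT t ht
    by_cases hTk : T ≤ ρ.ker
    · exact (Subgroup.mem_centralizer_iff.mp (hX₀ker hx) t (hTk ht)).symm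
    · have hnormX : X₀ ≤ Subgroup.normalizer (T : Set G) := by
        refine (Subgroup.closure_le _).mpr ?_
        rintro y ⟨T', hT', hT'k, hyT'⟩
        by_cases heq : T' = T
        · subst heq
          exact Subgroup.le_normalizer hyT'
        · obtain ⟨d, hd⟩ := hT.2.1
          obtain ⟨d', hd'⟩ := hT'.2.1
          rcases wielandt d T' T ⊤ hT'.1 hd' hd with hle | hcomm
          · rcases wielandt d' T T' ⊤ hT.1 hd hd' with hle2 | hcomm2
            · exact absurd (le_antisymm hle hle2) heq
            · have hT'bot : T' ≤ ⊥ := by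
                rw [← hT.2.2]
                refine le_inf hle (Subgroup.commutator_eq_bot_iff_le_centralizer.mp ?_)
                rwa [Subgroup.commutator_comm] at hcomm2
              have hy1 : y = 1 := by simpa using hT'bot hyT'
              rw [hy1]
              exact one_mem _
          · exact centralizer_le_normalizer' T
              (Subgroup.commutator_eq_bot_iff_le_centralizer.mp hcomm hyT')
      have hconj : x * t * x⁻¹ * t⁻¹ ∈ T ⊓ ρ.ker := by
        constructor
        · have h1 : x * t * x⁻¹ ∈ T := (Subgroup.mem_normalizer_iff.mp (hnormX hx) t).mp ht
          exact T.mul_mem h1 (T.inv_mem ht)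
        · refine MonoidHom.mem_ker.mpr ?_
          rw [map_mul, map_mul, map_mul, map_inv, map_inv]
          have htL : ρ t ∈ Lt := ⟨t, Subgroup.subset_closure ⟨T, hT, ht⟩, rfl⟩
          have hcent := Subgroup.mem_centralizer_iff.mp hc2 (ρ t) htL
          rw [hρw] at hcent
          rw [← hcent]
          group
      rcases step1 T hT with h | h
      · exact absurd h hTk
      · have := h.2 ▸ hconj
        rw [Subgroup.mem_bot] at this
        have h4 : x * t = t * x := by
          have h5 : x * t * x⁻¹ * t⁻¹ * (t * x) = x * t := by group
          rw [this] at h5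
          rw [← h5]
          group
        exact h4
  have hxL : x ∈ L := by
    have hX₀L : X₀ ≤ L := by
      refine (Subgroup.closure_le _).mpr ?_
      rintro y ⟨T, hT, _, hyT⟩
      exact Subgroup.subset_closure ⟨T, hT, hyT⟩
    exact hX₀L hx
  have hxcentL : x ∈ Subgroup.centralizer (L : Set G) := by
    rw [Subgroup.mem_centralizer_iff]
    intro h hh
    have hsub : L ≤ Subgroup.centralizer ({x} : Set G) := by
      refine (Subgroup.closure_le _).mpr ?_
      rintro y ⟨T, hT, hyT⟩
      exact Subgroup.mem_centralizer_singleton_iff.mpr (hxcent T hT y hyT).symm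
    exact Subgroup.mem_centralizer_singleton_iff.mp (hsub hh)
  have hZle : L ⊓ Subgroup.centralizer (L : Set G) ≤ solubleRadical G := by
    haveI hLnorm : L.Normal := closure_famSet_normal
    have hcnorm : (Subgroup.centralizer (L : Set G)).Normal := by
      constructor
      intro n hn g
      rw [Subgroup.mem_centralizer_iff]
      intro h hh
      have h1 : g⁻¹ * h * g ∈ L := by
        have := hLnorm.conj_mem h hh g⁻¹
        simpa using this
      have h2 := Subgroup.mem_centralizer_iff.mp hn _ h1
      -- h2 : (g⁻¹*h*g)*n = n*(g⁻¹*h*g); want h * (g*n*g⁻¹) = (g*n*g⁻¹)*h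
      have h3 : g * ((g⁻¹ * h * g) * n) * g⁻¹ = g * (n * (g⁻¹ * h * g)) * g⁻¹ := by rw [h2]
      calc h * (g * n * g⁻¹) = g * ((g⁻¹ * h * g) * n) * g⁻¹ := by group
        _ = g * (n * (g⁻¹ * h * g)) * g⁻¹ := h3
        _ = (g * n * g⁻¹) * h := by group
    have hnorm : (L ⊓ Subgroup.centralizer (L : Set G)).Normal :=
      ⟨fun n hn g => ⟨hLnorm.conj_mem _ hn.1 g, hcnorm.conj_mem _ hn.2 g⟩⟩
    exact normal_solvable_le_solubleRadical hnorm
      (isSolvable_of_abelian fun a ha b hb => Subgroup.mem_centralizer_iff.mp hb.2 a ha.1)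
  have hx1 : x = 1 := by
    have := hZle ⟨hxL, hxcentL⟩
    rwa [hrad, Subgroup.mem_bot] at this
  rw [Subgroup.mem_bot, hρw, hx1, map_one]

end KS
namespace KS

open Subgroup Function

theorem normalizer_conj_inv_map {Gt : Type*} [Group Gt] {H : Subgroup Gt} {y : Gt}
    (hy : y ∈ Subgroup.normalizer (H : Set Gt)) : H.map (MulAut.conj y⁻¹).toMonoidHom = H := by
  ext a
  constructor
  · rintro ⟨h, hh, rfl⟩
    have h1 : y * (y⁻¹ * h * y) * y⁻¹ = h := by group
    have h2 : y⁻¹ * h * y ∈ H := (Subgroup.mem_normalizer_iff.mp hy (y⁻¹ * h * y)).mpr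
      (by rwa [h1])
    simpa [MulAut.conj] using h2
  · intro ha
    refine ⟨y * a * y⁻¹, (Subgroup.mem_normalizer_iff.mp hy a).mp ha, ?_⟩
    simp [MulAut.conj]
    group

theorem main_tilde {G Gt : Type*} [Group G] [Group Gt] [Finite G]
    (hrad : solubleRadical G = ⊥) (ρ : G →* Gt) (hρ : Surjective ρ)
    (Kt : Subgroup Gt) (hKsub : ∃ e, Rsub e Kt (⊤ : Subgroup Gt))
    (hKd : Rdich Kt) (hKbot : Kt ≠ ⊥)
    (hKle : Kt ≤ (Subgroup.closure (famSet G)).map ρ) :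
    ((Subgroup.closure (famSet G)).map ρ ≤ Subgroup.normalizer (Kt : Set Gt)) ∧ ⁅Kt, Kt⁆ = Kt := by
  have hLt : (Subgroup.closure (famSet G)).map ρ = Subgroup.closure (ρ '' famSet G) :=
    MonoidHom.map_closure ρ _
  obtain ⟨e, he⟩ := hKsub
  have hgen : ∀ y ∈ ρ '' famSet G,
      ∃ Tt : Subgroup Gt, Quasi Tt ∧ (∃ d, Rsub d Tt ⊤) ∧ y ∈ Tt := by
    rintro _ ⟨u, ⟨T, hT, huT⟩, rfl⟩
    obtain ⟨d, hd⟩ := hT.2.1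
    refine ⟨T.map ρ, quasi_map ρ hT.1, ⟨d, ?_⟩, ⟨u, huT, rfl⟩⟩
    have h1 := rsub_map ρ hd
    rwa [← MonoidHom.range_eq_map, MonoidHom.range_eq_top_of_surjective _ hρ] at h1
  have hnormal : (Subgroup.closure (famSet G)).map ρ ≤ Subgroup.normalizer (Kt : Set Gt) := by
    rw [hLt]
    refine (Subgroup.closure_le _).mpr ?_
    intro y hy
    obtain ⟨Tt, hq, ⟨d, hd⟩, hyT⟩ := hgen y hy
    rcases wielandt e Tt Kt ⊤ hq hd he with h | h
    · exact Subgroup.le_normalizer (h hyT)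
    · exact centralizer_le_normalizer' Kt
        (Subgroup.commutator_eq_bot_iff_le_centralizer.mp h hyT)
  refine ⟨hnormal, ?_⟩
  have hrn : Rnorm ⁅Kt, Kt⁆ Kt := by
    refine ⟨?_, fun x hx a ha => ?_⟩
    · rw [Subgroup.commutator_le]
      intro g₁ h₁ g₂ h₂
      rw [commutatorElement_def]
      exact Kt.mul_mem (Kt.mul_mem (Kt.mul_mem h₁ h₂) (Kt.inv_mem h₁)) (Kt.inv_mem h₂)
    · have hmap : ⁅Kt, Kt⁆.map (MulAut.conj x).toMonoidHom = ⁅Kt, Kt⁆ := by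
        rw [Subgroup.map_commutator, rnorm_conj_map_eq (rnorm_self Kt) hx]
      rw [← hmap]
      exact ⟨a, ha, by simp⟩
  rcases hKd _ hrn with h | h
  · exfalso
    have hcent : (Subgroup.closure (famSet G)).map ρ ≤
        Subgroup.centralizer (Kt : Set Gt) := by
      rw [hLt]
      refine (Subgroup.closure_le _).mpr ?_
      intro y hy
      obtain ⟨Tt, hq, ⟨d, hd⟩, hyT⟩ := hgen y hy
      rcases wielandt e Tt Kt ⊤ hq hd he with h' | h'
      · have h2 : ⁅Tt, Tt⁆ ≤ ⊥ := h ▸ Subgroup.commutator_mono h' h'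
        have hTbot : Tt = ⊥ := by rw [← hq.1]; exact le_bot_iff.mp h2
        rw [hTbot, Subgroup.mem_bot] at hyT
        rw [hyT]
        exact one_mem _
      · exact Subgroup.commutator_eq_bot_iff_le_centralizer.mp h' hyT
    have hKcentL : Kt ≤ (Subgroup.closure (famSet G)).map ρ ⊓
        Subgroup.centralizer (((Subgroup.closure (famSet G)).map ρ : Subgroup Gt) : Set Gt) := by
      refine le_inf hKle fun k hk => ?_
      rw [Subgroup.mem_centralizer_iff]
      intro l hl
      exact (Subgroup.mem_centralizer_iff.mp (hcent hl) k hk).symm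
    have hbot := hKcentL.trans (le_of_eq (ZL hrad ρ))
    exact hKbot (le_bot_iff.mp hbot)
  · exact h

end KS
section
open KS Function

/-- **Lemma.** Let `N` be a normal subgroup of a finite group `G` and `K/N` a simple
subnormal subgroup of `G/N`.  Let `D` be a subgroup of `G` such that `K = DN`,
`D ≤ L_j(G)N` and `D ≰ M_j(G)N` (where `(M_j, L_j)` is the upper nonsoluble series).
Then `[D, D^x]·N·M_j(G) = K·M_j(G)` for any `x ∈ L_j(G)N`. -/
theorem commutator_conj_sup_eq
    (G : Type u) [Group G] [Finite G] (N K D : Subgroup G)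
    (hN : N.Normal) (hNK : N ≤ K)
    (hsub : IsSubnormal (K.map (QuotientGroup.mk' N)))
    (hsimple : IsSimpleGroup ↥(K.map (QuotientGroup.mk' N)))
    (j : ℕ) (hDN : D ⊔ N = K)
    (hDL : D ≤ upperL G j ⊔ N) (hDM : ¬ D ≤ upperM G j ⊔ N) :
    ∀ x ∈ upperL G j ⊔ N,
      ⁅D, D.map (MulAut.conj x⁻¹).toMonoidHom⁆ ⊔ N ⊔ upperM G j = K ⊔ upperM G j := by
  rcases j with _ | j
  · exfalso
    rw [KS.upperM_zero] at hDM
    rw [KS.upperL_zero] at hDL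
    exact hDM hDL
  intro x hx
  set M := upperM G (j + 1) with hM
  set L := upperL G (j + 1) with hL
  set W := N ⊔ M with hW
  haveI hWn : W.Normal := Subgroup.sup_normal N M
  set π := QuotientGroup.mk' W with hπ
  have hMW : M ≤ W := le_sup_right
  have hNW : N ≤ W := le_sup_left
  set ρ : (G ⧸ M) →* G ⧸ W :=
    QuotientGroup.map M W (MonoidHom.id G) (fun g hg => by simpa using hMW hg) with hρdef
  have hρmk : ∀ g : G, ρ (QuotientGroup.mk' M g) = π g := fun g =>
    QuotientGroup.map_mk' M W (MonoidHom.id G) _ g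
  have hρπ : ρ.comp (QuotientGroup.mk' M) = π := MonoidHom.ext hρmk
  have hρs : Surjective ρ := fun y => by
    obtain ⟨g, rfl⟩ := QuotientGroup.mk'_surjective W y
    exact ⟨QuotientGroup.mk' M g, hρmk g⟩
  haveI : Finite (G ⧸ M) := Quotient.finite _
  have hrad : solubleRadical (G ⧸ M) = ⊥ := radical_quot_upperM j
  have hπN : N.map π = ⊥ := by
    rw [eq_bot_iff]
    rintro _ ⟨n, hn, rfl⟩
    rw [Subgroup.mem_bot]
    exact (QuotientGroup.eq_one_iff n).mpr (hNW hn)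
  set Kt := K.map π with hKt
  have hDmap : D.map π = Kt := by
    rw [hKt, ← hDN, Subgroup.map_sup, hπN, sup_bot_eq]
  have hLmap : L.map π = (Subgroup.closure (famSet (G ⧸ M))).map ρ := by
    have h1 : L.map (QuotientGroup.mk' M) = genFitting (G ⧸ M) := by
      rw [hL, upperL_succ]
      exact Subgroup.map_comap_eq_self_of_surjective (QuotientGroup.mk'_surjective M) _
    calc L.map π = (L.map (QuotientGroup.mk' M)).map ρ := by rw [Subgroup.map_map, hρπ]
      _ = (genFitting (G ⧸ M)).map ρ := by rw [h1]
      _ = (Subgroup.closure (famSet (G ⧸ M))).map ρ := by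
          rw [genFitting_eq_closure_famSet hrad]
  have hKLN : K ≤ L ⊔ N := by
    rw [← hDN]
    exact sup_le hDL le_sup_right
  have hLNmap : (L ⊔ N).map π = L.map π := by rw [Subgroup.map_sup, hπN, sup_bot_eq]
  have hKle : Kt ≤ (Subgroup.closure (famSet (G ⧸ M))).map ρ := by
    rw [← hLmap, ← hLNmap]
    exact Subgroup.map_mono hKLN
  set θ : (G ⧸ N) →* G ⧸ W :=
    QuotientGroup.map N W (MonoidHom.id G) (fun g hg => by simpa using hNW hg) with hθdef
  have hθmk : ∀ g : G, θ (QuotientGroup.mk' N g) = π g := fun g =>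
    QuotientGroup.map_mk' N W (MonoidHom.id G) _ g
  have hθπ : θ.comp (QuotientGroup.mk' N) = π := MonoidHom.ext hθmk
  have hθs : Surjective θ := fun y => by
    obtain ⟨g, rfl⟩ := QuotientGroup.mk'_surjective W y
    exact ⟨QuotientGroup.mk' N g, hθmk g⟩
  have hKtθ : (K.map (QuotientGroup.mk' N)).map θ = Kt := by rw [Subgroup.map_map, hθπ]
  have hKsub : ∃ e, Rsub e Kt (⊤ : Subgroup (G ⧸ W)) := by
    obtain ⟨n, hn⟩ := rsub_of_isSubnormal hsub
    refine ⟨n, ?_⟩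
    have h2 := rsub_map θ hn
    rwa [hKtθ, ← MonoidHom.range_eq_map, MonoidHom.range_eq_top_of_surjective _ hθs] at h2
  have hKd : Rdich Kt := by
    rw [← hKtθ]
    exact rdich_map θ (rdich_of_isSimpleGroup hsimple)
  have hKbot : Kt ≠ ⊥ := by
    intro hbot
    apply hDM
    have hKW : K ≤ W := by
      intro k hk
      have h3 : π k ∈ Kt := ⟨k, hk, rfl⟩
      rw [hbot, Subgroup.mem_bot] at h3
      exact (QuotientGroup.eq_one_iff k).mp h3
    have hDW : D ≤ W := le_trans (hDN ▸ le_sup_left) hKW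
    rwa [hW, sup_comm N M] at hDW
  obtain ⟨hnormal, hperf⟩ := main_tilde hrad ρ hρs Kt hKsub hKd hKbot hKle
  have hπx : π x ∈ Subgroup.normalizer (Kt : Set (G ⧸ W)) := by
    apply hnormal
    rw [← hLmap, ← hLNmap]
    exact ⟨x, hx, rfl⟩
  have hhom : π.comp (MulAut.conj x⁻¹).toMonoidHom
      = (MulAut.conj (π x)⁻¹).toMonoidHom.comp π := by
    ext g
    simp [MulAut.conj]
  have hDxmap : (D.map (MulAut.conj x⁻¹).toMonoidHom).map π = Kt := by
    rw [Subgroup.map_map, hhom, ← Subgroup.map_map, hDmap]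
    exact normalizer_conj_inv_map hπx
  have hcommmap : (⁅D, D.map (MulAut.conj x⁻¹).toMonoidHom⁆).map π = K.map π := by
    rw [Subgroup.map_commutator, hDmap, hDxmap, hperf]
  have hfinal := congrArg (Subgroup.comap π) hcommmap
  rw [Subgroup.comap_map_eq, Subgroup.comap_map_eq, QuotientGroup.ker_mk'] at hfinal
  calc ⁅D, D.map (MulAut.conj x⁻¹).toMonoidHom⁆ ⊔ N ⊔ M
      = ⁅D, D.map (MulAut.conj x⁻¹).toMonoidHom⁆ ⊔ W := by rw [sup_assoc, hW]
    _ = K ⊔ W := hfinal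
    _ = K ⊔ N ⊔ M := by rw [hW, ← sup_assoc]
    _ = K ⊔ M := by rw [sup_eq_left.mpr hNK]

end
end
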